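/- arXiv:1204.0644 — 10 statements merged into one kernel-verified Lean document; each statement's English description precedes it below -/
import Mathlib

section
/- Let G be a graph of order n ≥ 2 and let H be any graph with root vertex v and at least two vertices. Then the domination number of the rooted product satisfies γ(G∘H) ∈ {n·γ(H), n·(γ(H)−1) + γ(G)}. -/
open Finset
open scoped Classical

/-- `S` is a dominating set of `G`: every vertex outside `S` has a neighbor in `S`. -/
def IsDomSet {α : Type*} (G : SimpleGraph α) (S : Set α) : Prop :=
  ∀ v ∉ S, ∃ u ∈ S, G.Adj u v

/-- The domination number `γ(G)`. -/
noncomputable def domNum {α : Type*} (G : SimpleGraph α) [Fintype α] : ℕ :=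
  sInf {k | ∃ S : Finset α, IsDomSet G ↑S ∧ S.card = k}

/-- The rooted product `G ∘ H` with root `v` of `H`: one copy of `H` for each vertex of `G`,
identifying the root of the `a`-th copy with the vertex `a` of `G`. -/
def rootedProd {α β : Type*} (G : SimpleGraph α) (H : SimpleGraph β) (v : β) :
    SimpleGraph (α × β) where
  Adj x y := (x.2 = v ∧ y.2 = v ∧ G.Adj x.1 y.1) ∨ (x.1 = y.1 ∧ H.Adj x.2 y.2)
  symm := by
    constructor
    rintro x y (⟨h1, h2, h3⟩ | ⟨h1, h2⟩)
    · exact Or.inl ⟨h2, h1, h3.symm⟩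
    · exact Or.inr ⟨h1.symm, h2.symm⟩
  loopless := by
    constructor
    rintro x (⟨_, _, h⟩ | ⟨_, h⟩)
    · exact G.loopless.irrefl _ h
    · exact H.loopless.irrefl _ h

/-- The graph `G - v` obtained by deleting the vertex `v`. -/
def deleteVert {α : Type*} (G : SimpleGraph α) (v : α) : SimpleGraph {u : α // u ≠ v} :=
  SimpleGraph.comap Subtype.val G

/-- The graph `G - A` obtained by deleting a set `A` of vertices. -/
def deleteSet {α : Type*} (G : SimpleGraph α) (A : Set α) : SimpleGraph {u : α // u ∉ A} :=
  SimpleGraph.comap Subtype.val G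

/-- `f` is a Roman dominating function on `G`. -/
def IsRDF {α : Type*} (G : SimpleGraph α) (f : α → ℕ) : Prop :=
  (∀ u, f u ≤ 2) ∧ ∀ u, f u = 0 → ∃ w, G.Adj u w ∧ f w = 2

/-- The Roman domination number `γ_R(G)`. -/
noncomputable def romanDomNum {α : Type*} (G : SimpleGraph α) [Fintype α] : ℕ :=
  sInf {k | ∃ f : α → ℕ, IsRDF G f ∧ ∑ u, f u = k}

/-- `S` is an independent set of `G`. -/
def IsIndep {α : Type*} (G : SimpleGraph α) (S : Set α) : Prop :=
  ∀ u ∈ S, ∀ w ∈ S, ¬ G.Adj u w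

/-- The independence number `α(G)`. -/
noncomputable def indepNum {α : Type*} (G : SimpleGraph α) [Fintype α] : ℕ :=
  sSup {k | ∃ S : Finset α, IsIndep G ↑S ∧ S.card = k}

/-- The independent domination number `i(G)`. -/
noncomputable def indepDomNum {α : Type*} (G : SimpleGraph α) [Fintype α] : ℕ :=
  sInf {k | ∃ S : Finset α, IsDomSet G ↑S ∧ IsIndep G ↑S ∧ S.card = k}

/-- `S` is a connected dominating set of `G`. -/
def IsConnDomSet {α : Type*} (G : SimpleGraph α) (S : Set α) : Prop :=
  IsDomSet G S ∧ (G.induce S).Connected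

/-- The connected domination number `γ_c(G)`. -/
noncomputable def connDomNum {α : Type*} (G : SimpleGraph α) [Fintype α] : ℕ :=
  sInf {k | ∃ S : Finset α, IsConnDomSet G ↑S ∧ S.card = k}

/-- `D` is a super dominating set of `G`: every `w ∉ D` has a neighbor `u ∈ D` with
`N(u) ⊆ D ∪ {w}`. -/
def IsSuperDomSet {α : Type*} (G : SimpleGraph α) (D : Set α) : Prop :=
  ∀ w ∉ D, ∃ u ∈ D, G.Adj u w ∧ ∀ x, G.Adj u x → x ∈ D ∪ {w}

/-- The super domination number `γ_sp(G)`. -/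
noncomputable def superDomNum {α : Type*} (G : SimpleGraph α) [Fintype α] : ℕ :=
  sInf {k | ∃ S : Finset α, IsSuperDomSet G ↑S ∧ S.card = k}

/-- The number of end vertices (vertices of degree one) of `G`, denoted `n₁(G)`. -/
noncomputable def endVertCount {α : Type*} (G : SimpleGraph α) [Fintype α] : ℕ :=
  Nat.card {u : α // G.degree u = 1}

section AuxDom

variable {α : Type*} [Fintype α] (G : SimpleGraph α)

lemma exists_min_domset : ∃ S : Finset α, IsDomSet G ↑S ∧ S.card = domNum G := by
  have h : domNum G ∈ {k | ∃ S : Finset α, IsDomSet G ↑S ∧ S.card = k} :=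
    Nat.sInf_mem ⟨Fintype.card α, Finset.univ, by intro v hv; simp at hv, Finset.card_univ⟩
  exact h

lemma domNum_le_card {S : Finset α} (h : IsDomSet G ↑S) : domNum G ≤ S.card :=
  Nat.sInf_le ⟨S, h, rfl⟩

lemma one_le_domNum [Nonempty α] : 1 ≤ domNum G := by
  obtain ⟨S, hS, hcard⟩ := exists_min_domset G
  rcases Nat.eq_zero_or_pos (domNum G) with h0 | h1
  · exfalso
    have hS0 : S = ∅ := Finset.card_eq_zero.mp (hcard.trans h0)
    obtain ⟨a⟩ := ‹Nonempty α›
    obtain ⟨u, hu, -⟩ := hS a (by simp [hS0])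
    simp [hS0] at hu
  · exact h1

end AuxDom

section RootedAux

variable {α β : Type*} [Fintype α] [Fintype β]
variable (G : SimpleGraph α) (H : SimpleGraph β) (v : β)

lemma rootedProd_upper1 : domNum (rootedProd G H v) ≤ Fintype.card α * domNum H := by
  obtain ⟨S, hS, hcard⟩ := exists_min_domset H
  have hdom : IsDomSet (rootedProd G H v) ↑((Finset.univ : Finset α) ×ˢ S) := by
    rintro ⟨a, u⟩ h
    have hu : u ∉ S := by simpa using h
    obtain ⟨w, hw, hadj⟩ := hS u (by simpa using hu)
    refine ⟨(a, w), ?_, Or.inr ⟨rfl, hadj⟩⟩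
    simpa using hw
  have hle := domNum_le_card _ hdom
  rwa [Finset.card_product, Finset.card_univ, hcard] at hle

lemma rootedProd_upper2 (D' : Finset β) (hv : v ∉ D')
    (hdom : ∀ u, u ≠ v → u ∉ D' → ∃ w ∈ D', H.Adj w u)
    (S : Finset α) (hS : IsDomSet G ↑S) :
    domNum (rootedProd G H v) ≤ Fintype.card α * D'.card + S.card := by
  set T := (Finset.univ : Finset α) ×ˢ D' ∪ S ×ˢ ({v} : Finset β) with hT
  have hdisj : Disjoint ((Finset.univ : Finset α) ×ˢ D') (S ×ˢ ({v} : Finset β)) := by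
    rw [Finset.disjoint_left]
    rintro ⟨a, u⟩ h1 h2
    simp only [Finset.mem_product, Finset.mem_singleton, Finset.mem_univ, true_and] at h1 h2
    exact hv (h2.2 ▸ h1)
  have hdomT : IsDomSet (rootedProd G H v) ↑T := by
    rintro ⟨a, u⟩ h
    simp only [hT, Finset.coe_union, Set.mem_union, Finset.mem_coe, Finset.mem_product,
      Finset.mem_univ, true_and, Finset.mem_singleton] at h
    push_neg at h
    by_cases huv : u = v
    · subst huv
      have haS : a ∉ S := fun hs => h.2 hs rfl
      obtain ⟨b, hb, hadj⟩ := hS a (by simpa using haS)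
      refine ⟨(b, u), ?_, Or.inl ⟨rfl, rfl, hadj⟩⟩
      simp only [hT, Finset.coe_union, Set.mem_union, Finset.mem_coe, Finset.mem_product,
        Finset.mem_singleton]
      exact Or.inr ⟨by simpa using hb, by trivial⟩
    · obtain ⟨w, hw, hadj⟩ := hdom u huv h.1
      refine ⟨(a, w), ?_, Or.inr ⟨rfl, hadj⟩⟩
      simp only [hT, Finset.coe_union, Set.mem_union, Finset.mem_coe, Finset.mem_product,
        Finset.mem_univ, true_and]
      exact Or.inl hw
  have hle := domNum_le_card _ hdomT
  calc domNum (rootedProd G H v) ≤ T.card := hle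
    _ = Fintype.card α * D'.card + S.card := by
        rw [hT, Finset.card_union_of_disjoint hdisj, Finset.card_product, Finset.card_product,
          Finset.card_univ, Finset.card_singleton, mul_one]

lemma rootedProd_key [Nonempty β] (D : Finset (α × β))
    (hD : IsDomSet (rootedProd G H v) ↑D) :
    Fintype.card α * (domNum H - 1) + domNum G ≤ D.card ∧
      (D.card < Fintype.card α * domNum H →
        ∃ D' : Finset β, v ∉ D' ∧ D'.card ≤ domNum H - 1 ∧
          ∀ u, u ≠ v → u ∉ D' → ∃ w ∈ D', H.Adj w u) := by
  classical
  have h1H : 1 ≤ domNum H := one_le_domNum H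
  set Da : α → Finset β := fun a => (D.filter fun p => p.1 = a).image Prod.snd with hDa
  have hmem : ∀ a u, u ∈ Da a ↔ (a, u) ∈ D := by
    intro a u
    constructor
    · intro h
      simp only [hDa, Finset.mem_image, Finset.mem_filter] at h
      obtain ⟨p, ⟨hp, h1⟩, h2⟩ := h
      rwa [show (a, u) = p from Prod.ext h1.symm h2.symm]
    · intro h
      simp only [hDa, Finset.mem_image, Finset.mem_filter]
      exact ⟨(a, u), ⟨h, rfl⟩, rfl⟩
  have hdomin : ∀ a u, u ≠ v → u ∉ Da a → ∃ w ∈ Da a, H.Adj w u := by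
    intro a u huv hu
    obtain ⟨p, hp, hadj⟩ := hD (a, u) (by simpa [hmem] using hu)
    rcases hadj with ⟨h1, h2, h3⟩ | ⟨h1, h2⟩
    · exact absurd h2 huv
    · refine ⟨p.2, ?_, h2⟩
      rw [hmem]
      rwa [show (a, p.2) = p from Prod.ext h1.symm rfl]
  set P : α → Prop := fun a => (a, v) ∈ D ∨ ∃ u, (a, u) ∈ D ∧ H.Adj u v with hP
  have hP1 : ∀ a, P a → domNum H ≤ (Da a).card := by
    intro a ha
    apply domNum_le_card
    intro u hu
    rw [Finset.mem_coe, hmem] at hu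
    by_cases huv : u = v
    · subst huv
      rcases ha with h | ⟨w, hw, hadj⟩
      · exact absurd h hu
      · exact ⟨w, by rw [Finset.mem_coe, hmem]; exact hw, hadj⟩
    · obtain ⟨w, hw, hadj⟩ := hdomin a u huv (by rw [hmem]; exact hu)
      exact ⟨w, hw, hadj⟩
  have hP2 : ∀ a, ¬ P a → domNum H ≤ (Da a).card + 1 := by
    intro a ha
    simp only [hP] at ha
    push_neg at ha
    have hv' : v ∉ Da a := by rw [hmem]; exact ha.1
    have hdom' : IsDomSet H ↑(insert v (Da a)) := by
      intro u hu
      simp only [Finset.coe_insert, Set.mem_insert_iff, Finset.mem_coe] at hu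
      push_neg at hu
      obtain ⟨w, hw, hadj⟩ := hdomin a u hu.1 hu.2
      exact ⟨w, by simp [hw], hadj⟩
    calc domNum H ≤ (insert v (Da a)).card := domNum_le_card _ hdom'
      _ = (Da a).card + 1 := Finset.card_insert_of_notMem hv'
  have hGdom : IsDomSet G ↑(Finset.univ.filter P) := by
    intro a ha
    simp only [Finset.coe_filter, Set.mem_setOf_eq, Finset.mem_univ, true_and] at ha
    simp only [hP] at ha
    push_neg at ha
    obtain ⟨p, hp, hadj⟩ := hD (a, v) (by simpa using ha.1)
    rcases hadj with ⟨h1, h2, h3⟩ | ⟨h1, h2⟩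
    · refine ⟨p.1, ?_, h3⟩
      simp only [Finset.coe_filter, Set.mem_setOf_eq, Finset.mem_univ, true_and, hP]
      left
      rwa [show (p.1, v) = p from Prod.ext rfl h1.symm]
    · exact absurd h2 (ha.2 p.2 (by rwa [show (a, p.2) = p from Prod.ext h1.symm rfl]))
  have hGle : domNum G ≤ (Finset.univ.filter P).card := domNum_le_card _ hGdom
  have hcardsum : D.card = ∑ a, (Da a).card := by
    rw [Finset.card_eq_sum_card_fiberwise (f := Prod.fst) (t := Finset.univ)
      (fun x _ => Finset.mem_univ _)]
    refine Finset.sum_congr rfl fun a _ => ?_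
    refine (Finset.card_image_of_injOn ?_).symm
    intro p hp q hq h
    simp only [Finset.mem_coe, Finset.mem_filter] at hp hq
    exact Prod.ext (hp.2.trans hq.2.symm) h
  have hbound : ∀ a, (domNum H - 1) + (if P a then 1 else 0) ≤ (Da a).card := by
    intro a
    split_ifs with h
    · have := hP1 a h; omega
    · have := hP2 a h; omega
  have hsum : Fintype.card α * (domNum H - 1) + (Finset.univ.filter P).card
      ≤ ∑ a, (Da a).card := by
    have heq : ∑ a : α, ((domNum H - 1) + (if P a then 1 else 0))
        = Fintype.card α * (domNum H - 1) + (Finset.univ.filter P).card := by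
      rw [Finset.sum_add_distrib, Finset.sum_const, smul_eq_mul, Finset.card_univ,
        (Finset.card_filter P Finset.univ)]
    rw [← heq]
    exact Finset.sum_le_sum fun a _ => hbound a
  constructor
  · calc Fintype.card α * (domNum H - 1) + domNum G
        ≤ Fintype.card α * (domNum H - 1) + (Finset.univ.filter P).card := by omega
      _ ≤ ∑ a, (Da a).card := hsum
      _ = D.card := hcardsum.symm
  · intro hlt
    have hex : ∃ a, (Da a).card < domNum H := by
      by_contra hno
      push_neg at hno
      have hge : Fintype.card α * domNum H ≤ ∑ a, (Da a).card := by
        calc Fintype.card α * domNum H = ∑ _a : α, domNum H := by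
              rw [Finset.sum_const, smul_eq_mul, Finset.card_univ]
          _ ≤ _ := Finset.sum_le_sum fun a _ => hno a
      omega
    obtain ⟨a, ha⟩ := hex
    have hPa : ¬ P a := fun h => absurd (hP1 a h) (not_le.mpr ha)
    have hv' : v ∉ Da a := by
      rw [hmem]
      intro hcon
      exact hPa (Or.inl hcon)
    exact ⟨Da a, hv', by omega, fun u hu1 hu2 => hdomin a u hu1 hu2⟩

end RootedAux

/-- `γ(G∘H) ∈ {n·γ(H), n·(γ(H)−1) + γ(G)}`. -/
theorem stmt1 {α β : Type*} [Fintype α] [Fintype β]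
    (G : SimpleGraph α) (H : SimpleGraph β) (v : β)
    (hn : 2 ≤ Fintype.card α) (hm : 2 ≤ Fintype.card β) :
    domNum (rootedProd G H v) ∈
      ({Fintype.card α * domNum H,
        Fintype.card α * (domNum H - 1) + domNum G} : Set ℕ) := by
  have hβne : Nonempty β := Fintype.card_pos_iff.mp (by omega)
  have h1 := rootedProd_upper1 G H v
  simp only [Set.mem_insert_iff, Set.mem_singleton_iff]
  by_cases hc : domNum (rootedProd G H v) = Fintype.card α * domNum H
  · exact Or.inl hc
  · right
    obtain ⟨D, hD, hDcard⟩ := exists_min_domset (rootedProd G H v)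
    obtain ⟨hlow, hext⟩ := rootedProd_key G H v D hD
    have hlt : D.card < Fintype.card α * domNum H := by
      rw [hDcard]; exact lt_of_le_of_ne h1 hc
    obtain ⟨D', hv', hcard', hdom'⟩ := hext hlt
    obtain ⟨S, hS, hScard⟩ := exists_min_domset G
    have hup := rootedProd_upper2 G H v D' hv' hdom' S hS
    have hup2 : domNum (rootedProd G H v)
        ≤ Fintype.card α * (domNum H - 1) + domNum G := by
      refine hup.trans (add_le_add (Nat.mul_le_mul_left _ hcard') (le_of_eq hScard))
    exact le_antisymm hup2 (hDcard ▸ hlow)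
end

section
/- Let G = (V, E) be a graph and let f = (B₀, B₁, B₂) be a minimum-weight Roman dominating function on G, where Bᵢ = {u ∈ V : f(u) = i}. Then for every vertex v ∈ V: (i) if v ∈ B₀, then γ_R(G) − 1 ≤ γ_R(G − v) ≤ γ_R(G); (ii) if v ∈ B₁, then γ_R(G − v) = γ_R(G) − 1; (iii) if v ∈ B₂, then γ_R(G) − 1 ≤ γ_R(G − v) ≤ γ_R(G) + δ(v) − 2, where δ(v) is the degree of v in G. -/
open Finset
open scoped Classical

lemma rdf_set_nonempty {α : Type*} [Fintype α] (G : SimpleGraph α) :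
    {k | ∃ f : α → ℕ, IsRDF G f ∧ ∑ u, f u = k}.Nonempty :=
  ⟨∑ u : α, 2, fun _ => 2, ⟨fun _ => le_refl 2, fun u h => by simp at h⟩, rfl⟩

lemma romanDomNum_le_sum {α : Type*} [Fintype α] (G : SimpleGraph α) (f : α → ℕ)
    (hf : IsRDF G f) : romanDomNum G ≤ ∑ u, f u :=
  Nat.sInf_le ⟨f, hf, rfl⟩

lemma exists_min_rdf {α : Type*} [Fintype α] (G : SimpleGraph α) :
    ∃ f : α → ℕ, IsRDF G f ∧ ∑ u, f u = romanDomNum G :=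
  Nat.sInf_mem (rdf_set_nonempty G)

lemma sum_subtype_ne {α : Type*} [Fintype α] (v : α) (F : α → ℕ) :
    ∑ u : {u : α // u ≠ v}, F u.val = ∑ u ∈ Finset.univ.erase v, F u := by
  exact (Finset.sum_subtype (p := fun u => u ≠ v) (Finset.univ.erase v) (by simp) F).symm

lemma romanDomNum_ge_delete {α : Type*} [Fintype α] (G : SimpleGraph α) (v : α) :
    romanDomNum G ≤ romanDomNum (deleteVert G v) + 1 := by
  obtain ⟨g, hg, hsum⟩ := exists_min_rdf (deleteVert G v)
  set F : α → ℕ := fun u => if h : u = v then 1 else g ⟨u, h⟩ with hF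
  have hrdf : IsRDF G F := by
    constructor
    · intro u
      by_cases h : u = v
      · simp [hF, h]
      · simpa [hF, h] using hg.1 ⟨u, h⟩
    · intro u hu
      by_cases h : u = v
      · simp [hF, h] at hu
      · have : g ⟨u, h⟩ = 0 := by simpa [hF, h] using hu
        obtain ⟨w, hw1, hw2⟩ := hg.2 ⟨u, h⟩ this
        refine ⟨w.val, hw1, ?_⟩
        simpa [hF, w.prop] using hw2
  have hle := romanDomNum_le_sum G F hrdf
  have hsplit : ∑ u : α, F u = 1 + ∑ u : {u : α // u ≠ v}, g u := by
    rw [← Finset.add_sum_erase Finset.univ F (Finset.mem_univ v)]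
    congr 1
    · simp [hF]
    · rw [← sum_subtype_ne v F]
      apply Finset.sum_congr rfl
      intro u _
      simp [hF, u.prop]
  omega

/-- behaviour of the Roman domination number under vertex deletion, according to
the value of a minimum Roman dominating function at the deleted vertex. -/
theorem stmt2 {α : Type*} [Fintype α] (G : SimpleGraph α)
    (f : α → ℕ) (hf : IsRDF G f) (hmin : ∑ u, f u = romanDomNum G) (v : α) :
    (f v = 0 → romanDomNum G - 1 ≤ romanDomNum (deleteVert G v) ∧
      romanDomNum (deleteVert G v) ≤ romanDomNum G) ∧
    (f v = 1 → romanDomNum (deleteVert G v) = romanDomNum G - 1) ∧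
    (f v = 2 → romanDomNum G - 1 ≤ romanDomNum (deleteVert G v) ∧
      romanDomNum (deleteVert G v) ≤ romanDomNum G + G.degree v - 2) := by
  have hlow := romanDomNum_ge_delete G v
  have hfv_le : f v ≤ ∑ u, f u := Finset.single_le_sum (fun _ _ => Nat.zero_le _) (Finset.mem_univ v)
  have herase : f v + ∑ u ∈ Finset.univ.erase v, f u = ∑ u, f u :=
    Finset.add_sum_erase Finset.univ f (Finset.mem_univ v)
  -- restriction works when f v ≤ 1
  have hrestrict : f v ≤ 1 → romanDomNum (deleteVert G v) ≤ romanDomNum G - f v := by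
    intro h1
    set g : {u : α // u ≠ v} → ℕ := fun u => f u.val with hgdef
    have hrdf : IsRDF (deleteVert G v) g := by
      constructor
      · intro u; exact hf.1 u.val
      · intro u hu
        obtain ⟨w, hw1, hw2⟩ := hf.2 u.val hu
        have hwv : w ≠ v := by rintro rfl; omega
        exact ⟨⟨w, hwv⟩, hw1, hw2⟩
    have hle := romanDomNum_le_sum _ g hrdf
    have hsum : ∑ u : {u : α // u ≠ v}, g u = ∑ u ∈ Finset.univ.erase v, f u :=
      sum_subtype_ne v f
    omega
  refine ⟨?_, ?_, ?_⟩
  · intro h0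
    refine ⟨by omega, ?_⟩
    have := hrestrict (by omega)
    omega
  · intro h1
    have := hrestrict (by omega)
    omega
  · intro h2
    refine ⟨by omega, ?_⟩
    set g : {u : α // u ≠ v} → ℕ :=
      fun u => if G.Adj v u.val then max (f u.val) 1 else f u.val with hgdef
    have hrdf : IsRDF (deleteVert G v) g := by
      constructor
      · intro u
        by_cases h : G.Adj v u.val
        · simp only [hgdef, if_pos h]
          exact max_le (hf.1 u.val) (by norm_num)
        · simpa [hgdef, if_neg h] using hf.1 u.val
      · intro u hu
        have hnadj : ¬ G.Adj v u.val := by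
          intro h; simp [hgdef, if_pos h] at hu
        have hfu : f u.val = 0 := by simpa [hgdef, if_neg hnadj] using hu
        obtain ⟨w, hw1, hw2⟩ := hf.2 u.val hfu
        have hwv : w ≠ v := by
          rintro rfl; exact hnadj hw1.symm
        refine ⟨⟨w, hwv⟩, hw1, ?_⟩
        by_cases h : G.Adj v w
        · simp [hgdef, if_pos h, hw2]
        · simp [hgdef, if_neg h, hw2]
    have hle := romanDomNum_le_sum _ g hrdf
    have hpt : ∀ u : {u : α // u ≠ v},
        g u ≤ f u.val + (if G.Adj v u.val then 1 else 0) := by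
      intro u
      by_cases h : G.Adj v u.val
      · simp only [hgdef, if_pos h]; omega
      · simp [hgdef, if_neg h]
    have hsum1 : ∑ u : {u : α // u ≠ v}, g u ≤
        ∑ u : {u : α // u ≠ v}, (f u.val + (if G.Adj v u.val then 1 else 0)) :=
      Finset.sum_le_sum (fun u _ => hpt u)
    rw [Finset.sum_add_distrib] at hsum1
    have hA : ∑ u : {u : α // u ≠ v}, f u.val = ∑ u ∈ Finset.univ.erase v, f u :=
      sum_subtype_ne v f
    have hB : ∑ u : {u : α // u ≠ v}, (if G.Adj v u.val then 1 else 0) ≤ G.degree v := by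
      rw [sum_subtype_ne v (fun u => if G.Adj v u then 1 else 0)]
      have : ∑ u ∈ Finset.univ.erase v, (if G.Adj v u then (1:ℕ) else 0) ≤
          ∑ u ∈ Finset.univ, (if G.Adj v u then (1:ℕ) else 0) :=
        Finset.sum_le_sum_of_subset (Finset.erase_subset v Finset.univ)
      refine this.trans ?_
      rw [Finset.sum_boole]
      rw [← SimpleGraph.neighborFinset_eq_filter, SimpleGraph.degree]
      simp
    omega
end

section
/- Let G be a graph of order n ≥ 2 and let H be a graph with root vertex v and at least two vertices. If every minimum-weight Roman dominating function f on H satisfies f(v) = 0, then γ_R(G∘H) = n·γ_R(H). -/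
open Finset
open scoped Classical

lemma rdf_const2 {α : Type*} (G : SimpleGraph α) : IsRDF G (fun _ => 2) :=
  ⟨fun _ => le_refl 2, fun _ h => by simp at h⟩

lemma rdn_exists {α : Type*} [Fintype α] (G : SimpleGraph α) :
    ∃ f, IsRDF G f ∧ ∑ u, f u = romanDomNum G :=
  Nat.sInf_mem (⟨∑ _u : α, 2, fun _ => 2, rdf_const2 G, rfl⟩ :
    Set.Nonempty {k | ∃ f : α → ℕ, IsRDF G f ∧ ∑ u, f u = k})

lemma rdn_le {α : Type*} [Fintype α] (G : SimpleGraph α) {f : α → ℕ} (hf : IsRDF G f) :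
    romanDomNum G ≤ ∑ u, f u := Nat.sInf_le ⟨f, hf, rfl⟩

/-- if every minimum Roman dominating function of `H` assigns `0` to the root `v`,
then `γ_R(G∘H) = n·γ_R(H)`. -/
theorem stmt5 {α β : Type*} [Fintype α] [Fintype β]
    (G : SimpleGraph α) (H : SimpleGraph β) (v : β)
    (hn : 2 ≤ Fintype.card α) (hm : 2 ≤ Fintype.card β)
    (hv : ∀ f : β → ℕ, IsRDF H f → ∑ u, f u = romanDomNum H → f v = 0) :
    romanDomNum (rootedProd G H v) = Fintype.card α * romanDomNum H := by
  apply le_antisymm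
  · -- upper bound: replicate a minimum RDF of H on each copy
    obtain ⟨g, hg, hgs⟩ := rdn_exists H
    have hF : IsRDF (rootedProd G H v) (fun x : α × β => g x.2) := by
      refine ⟨fun x => hg.1 x.2, fun x hx => ?_⟩
      obtain ⟨w, hw, hw2⟩ := hg.2 x.2 hx
      exact ⟨(x.1, w), Or.inr ⟨rfl, hw⟩, hw2⟩
    calc romanDomNum (rootedProd G H v) ≤ ∑ x : α × β, g x.2 := rdn_le _ hF
      _ = ∑ _x : α, romanDomNum H := by
          rw [Fintype.sum_prod_type]; exact Finset.sum_congr rfl fun x _ => hgs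
      _ = Fintype.card α * romanDomNum H := by rw [Finset.sum_const, smul_eq_mul, Finset.card_univ]
  · -- lower bound
    obtain ⟨F, hF, hFs⟩ := rdn_exists (rootedProd G H v)
    rw [← hFs, Fintype.sum_prod_type]
    have hc : Fintype.card α * romanDomNum H = ∑ _a : α, romanDomNum H := by
      rw [Finset.sum_const, smul_eq_mul, Finset.card_univ]
    rw [hc]
    apply Finset.sum_le_sum
    intro a _
    -- the restriction of F to the copy of H at a, bumped at v
    set g : β → ℕ := fun b => if b = v then max 1 (F (a, v)) else F (a, b) with hgdef
    have hgRDF : IsRDF H g := by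
      constructor
      · intro b
        by_cases hb : b = v
        · simp [hgdef, hb, hF.1 (a, v)]
        · simp [hgdef, hb, hF.1 (a, b)]
      · intro b hb
        have hbv : b ≠ v := by
          intro h; rw [hgdef] at hb; simp [h] at hb
        have hb0 : F (a, b) = 0 := by simpa [hgdef, hbv] using hb
        obtain ⟨⟨y1, y2⟩, hy, hy2⟩ := hF.2 (a, b) hb0
        rcases hy with ⟨h1, _, _⟩ | ⟨h1, h2⟩
        · exact absurd h1 hbv
        · simp only at h1 h2
          subst h1
          refine ⟨y2, h2, ?_⟩
          by_cases hyv : y2 = v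
          · have : F (a, v) = 2 := hyv ▸ hy2
            simp [hgdef, hyv, this]
          · simp [hgdef, hyv, hy2]
    have hrle : romanDomNum H ≤ ∑ b, g b := rdn_le H hgRDF
    by_cases hav : F (a, v) = 0
    · have hsum : ∑ b, g b = (∑ b, F (a, b)) + 1 := by
        have : ∀ b, g b = F (a, b) + (if b = v then 1 else 0) := by
          intro b
          by_cases hb : b = v
          · simp [hgdef, hb, hav]
          · simp [hgdef, hb]
        rw [Finset.sum_congr rfl fun b _ => this b, Finset.sum_add_distrib,
          Finset.sum_ite_eq' Finset.univ v (fun _ => 1)]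
        simp
      by_contra hlt
      push_neg at hlt
      have heq : ∑ b, g b = romanDomNum H := by omega
      have := hv g hgRDF heq
      simp [hgdef, hav] at this
    · have : ∀ b, g b = F (a, b) := by
        intro b
        by_cases hb : b = v
        · have h1 : 1 ≤ F (a, v) := Nat.one_le_iff_ne_zero.mpr hav
          simp [hgdef, hb, Nat.max_eq_right h1]
        · simp [hgdef, hb]
      calc romanDomNum H ≤ ∑ b, g b := hrle
        _ = ∑ b, F (a, b) := Finset.sum_congr rfl fun b _ => this b
end

section
/- Let G be a graph of order n ≥ 2 and let H be a graph with root vertex v and at least two vertices. If there exist two minimum-weight Roman dominating functions h and h' on H such that h(v) = 1 and h'(v) = 2, then γ_R(G∘H) = n·(γ_R(H) − 1) + γ(G). -/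
open Finset
open scoped Classical

lemma rootedProd_adj {α β : Type*} {G : SimpleGraph α} {H : SimpleGraph β} {v : β}
    {x y : α × β} : (rootedProd G H v).Adj x y ↔
      (x.2 = v ∧ y.2 = v ∧ G.Adj x.1 y.1) ∨ (x.1 = y.1 ∧ H.Adj x.2 y.2) := Iff.rfl

lemma romanDomNum_le {β : Type*} [Fintype β] (H : SimpleGraph β) (g : β → ℕ)
    (hg : IsRDF H g) : romanDomNum H ≤ ∑ u, g u :=
  Nat.sInf_le ⟨g, hg, rfl⟩

lemma domNum_le {α : Type*} [Fintype α] (G : SimpleGraph α) (S : Finset α)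
    (hS : IsDomSet G ↑S) : domNum G ≤ S.card :=
  Nat.sInf_le ⟨S, hS, rfl⟩

lemma sum_ite_root {β : Type*} [Fintype β] (v : β) (g : β → ℕ) (c : ℕ) :
    ∑ u, (if u = v then c else g u) = ∑ u ∈ Finset.univ.erase v, g u + c := by
  rw [← Finset.sum_erase_add _ _ (Finset.mem_univ v)]
  simp only [if_pos rfl]
  congr 1
  exact Finset.sum_congr rfl fun u hu => if_neg (Finset.ne_of_mem_erase hu)


/-- if there are minimum Roman dominating functions `h, h'` of `H` with
`h(v) = 1` and `h'(v) = 2`, then `γ_R(G∘H) = n·(γ_R(H) − 1) + γ(G)`. -/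
theorem stmt6 {α β : Type*} [Fintype α] [Fintype β]
    (G : SimpleGraph α) (H : SimpleGraph β) (v : β)
    (hn : 2 ≤ Fintype.card α) (hm : 2 ≤ Fintype.card β)
    (h : β → ℕ) (hh : IsRDF H h) (hhmin : ∑ u, h u = romanDomNum H) (hh1 : h v = 1)
    (h' : β → ℕ) (hh' : IsRDF H h') (hh'min : ∑ u, h' u = romanDomNum H) (hh2 : h' v = 2) :
    romanDomNum (rootedProd G H v) =
      Fintype.card α * (romanDomNum H - 1) + domNum G := by
  classical
  have hγ1 : 1 ≤ romanDomNum H := by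
    have : h v ≤ ∑ u, h u := Finset.single_le_sum (fun i _ => Nat.zero_le _) (Finset.mem_univ v)
    omega
  obtain ⟨k, hk⟩ : ∃ k, romanDomNum H = k + 1 := ⟨romanDomNum H - 1, by omega⟩
  -- a minimum dominating set of G
  have hUnivDom : IsDomSet G (↑(Finset.univ : Finset α)) := by
    intro a ha; exact absurd (Finset.mem_coe.mpr (Finset.mem_univ a)) ha
  have hdmem : domNum G ∈ {k | ∃ S : Finset α, IsDomSet G ↑S ∧ S.card = k} :=
    Nat.sInf_mem ⟨Fintype.card α, Finset.univ, hUnivDom, Finset.card_univ⟩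
  obtain ⟨S, hSdom, hScard⟩ := hdmem
  -- the upper-bound RDF on the rooted product
  set F : α × β → ℕ := fun p => if p.1 ∈ S then h' p.2 else if p.2 = v then 0 else h p.2 with hF
  have hFrdf : IsRDF (rootedProd G H v) F := by
    constructor
    · rintro ⟨a, u⟩
      by_cases haS : a ∈ S
      · simp only [hF, if_pos haS]; exact hh'.1 u
      · simp only [hF, if_neg haS]
        by_cases huv : u = v
        · simp [huv]
        · simp only [if_neg huv]; exact hh.1 u
    · rintro ⟨a, u⟩ h0
      by_cases haS : a ∈ S
      · simp only [hF, if_pos haS] at h0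
        obtain ⟨w, hwadj, hw2⟩ := hh'.2 u h0
        refine ⟨(a, w), Or.inr ⟨rfl, hwadj⟩, ?_⟩
        simp [hF, if_pos haS, hw2]
      · simp only [hF, if_neg haS] at h0
        by_cases huv : u = v
        · obtain ⟨s, hsS, hsadj⟩ := hSdom a (by simpa using haS)
          have hsS' : s ∈ S := hsS
          refine ⟨(s, v), Or.inl ⟨huv, rfl, by simpa [huv] using hsadj.symm⟩, ?_⟩
          simp [hF, if_pos hsS', hh2]
        · rw [if_neg huv] at h0
          obtain ⟨w, hwadj, hw2⟩ := hh.2 u h0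
          have hwv : w ≠ v := by intro hwv; rw [hwv, hh1] at hw2; omega
          refine ⟨(a, w), Or.inr ⟨rfl, hwadj⟩, ?_⟩
          simp [hF, if_neg haS, if_neg hwv, hw2]
  -- weight of F
  have hrowsum : ∀ a : α, ∑ u, F (a, u) = k + (if a ∈ S then 1 else 0) := by
    intro a
    by_cases haS : a ∈ S
    · simp only [hF, if_pos haS, if_pos haS]
      rw [hh'min, hk]
    · simp only [hF, if_neg haS, if_neg haS]
      have he := sum_ite_root v h 0
      have he2 : ∑ u ∈ Finset.univ.erase v, h u + h v = ∑ u, h u :=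
        Finset.sum_erase_add _ _ (Finset.mem_univ v)
      rw [hhmin, hk] at he2
      omega
  have hFsum : ∑ p, F p = Fintype.card α * k + domNum G := by
    rw [Fintype.sum_prod_type]
    simp only [hrowsum]
    rw [Finset.sum_add_distrib, Finset.sum_const, Finset.card_univ, smul_eq_mul]
    congr 1
    rw [Finset.sum_ite_mem, Finset.univ_inter, Finset.sum_const, smul_eq_mul, mul_one, hScard]
  -- upper bound
  have hub : romanDomNum (rootedProd G H v) ≤ Fintype.card α * k + domNum G := by
    rw [← hFsum]; exact romanDomNum_le _ _ hFrdf
  -- lower bound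
  have hlb : Fintype.card α * k + domNum G ≤ romanDomNum (rootedProd G H v) := by
    apply le_csInf
    · exact ⟨∑ p, F p, F, hFrdf, rfl⟩
    rintro W ⟨f, hf, rfl⟩
    -- key claim: per-row lower bounds
    have key : ∀ a : α,
        k + 1 ≤ ∑ u ∈ Finset.univ.erase v, f (a, u) + max 1 (f (a, v)) := by
      intro a
      set g : β → ℕ := fun u => if u = v then max 1 (f (a, v)) else f (a, u) with hg
      have hgrdf : IsRDF H g := by
        constructor
        · intro u
          by_cases huv : u = v
          · simp only [hg, if_pos huv]
            exact max_le (by omega) (hf.1 (a, v))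
          · simp only [hg, if_neg huv]; exact hf.1 (a, u)
        · intro u h0
          by_cases huv : u = v
          · simp only [hg, if_pos huv] at h0
            have := le_max_left 1 (f (a, v)); omega
          · simp only [hg, if_neg huv] at h0
            obtain ⟨⟨b, c⟩, hqadj, hq2⟩ := hf.2 (a, u) h0
            rcases hqadj with ⟨h1, h2, h3⟩ | ⟨h1, h2⟩
            · exact absurd h1 huv
            · have hab : a = b := h1
              have h2' : H.Adj u c := h2
              refine ⟨c, h2', ?_⟩
              by_cases hcv : c = v
              · have : f (a, v) = 2 := by rw [← hcv, hab]; exact hq2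
                simp [hg, if_pos hcv, this]
              · simp only [hg, if_neg hcv]
                rw [hab]; exact hq2
      have hgb : romanDomNum H ≤ ∑ u, g u := romanDomNum_le _ _ hgrdf
      have hgs : ∑ u, g u = ∑ u ∈ Finset.univ.erase v, f (a, u) + max 1 (f (a, v)) := by
        rw [← Finset.sum_erase_add _ _ (Finset.mem_univ v)]
        simp only [hg, if_pos rfl]
        congr 1
        exact Finset.sum_congr rfl fun u hu => if_neg (Finset.ne_of_mem_erase hu)
      rw [hgs, hk] at hgb
      exact hgb
    have hrow : ∀ a : α, ∑ u ∈ Finset.univ.erase v, f (a, u) + f (a, v) = ∑ u, f (a, u) :=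
      fun a => Finset.sum_erase_add _ _ (Finset.mem_univ v)
    have hge_k : ∀ a : α, k ≤ ∑ u, f (a, u) := by
      intro a
      have h1 := key a; have h2 := hrow a
      have h3 : max 1 (f (a, v)) ≤ f (a, v) + 1 :=
        max_le (by omega) (by omega)
      omega
    have hpos : ∀ a : α, 1 ≤ f (a, v) → k + 1 ≤ ∑ u, f (a, u) := by
      intro a hfa
      have h1 := key a; have h2 := hrow a
      have h3 : max 1 (f (a, v)) = f (a, v) := max_eq_right hfa
      omega
    set D : Finset α := Finset.univ.filter (fun a => k + 1 ≤ ∑ u, f (a, u)) with hD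
    have hDdom : IsDomSet G ↑D := by
      intro a haD
      have haw : ¬ (k + 1 ≤ ∑ u, f (a, u)) := by
        intro hc; exact haD (Finset.mem_coe.mpr (Finset.mem_filter.mpr ⟨Finset.mem_univ a, hc⟩))
      have hfav : f (a, v) = 0 := by
        by_contra hc; exact haw (hpos a (by omega))
      obtain ⟨⟨b, c⟩, hqadj, hq2⟩ := hf.2 (a, v) hfav
      rcases hqadj with ⟨h1, h2, h3⟩ | ⟨h1, h2⟩
      · -- cross edge
        have hcv : c = v := h2
        have h3' : G.Adj a b := h3
        refine ⟨b, ?_, h3'.symm⟩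
        have hfb : f (b, v) = 2 := by rw [← hcv]; exact hq2
        have : k + 1 ≤ ∑ u, f (b, u) := hpos b (by omega)
        exact Finset.mem_coe.mpr (Finset.mem_filter.mpr ⟨Finset.mem_univ _, this⟩)
      · -- same-copy defender of the root: the restriction is an RDF on H
        exfalso
        have hab : a = b := h1
        have h2' : H.Adj v c := h2
        have hres : IsRDF H (fun u => f (a, u)) := by
          constructor
          · intro u; exact hf.1 (a, u)
          · intro u h0
            by_cases huv : u = v
            · refine ⟨c, ?_, ?_⟩
              · rw [huv]; exact h2'
              · show f (a, c) = 2
                rw [hab]; exact hq2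
            · obtain ⟨⟨b', c'⟩, hq'adj, hq'2⟩ := hf.2 (a, u) h0
              rcases hq'adj with ⟨g1, g2, g3⟩ | ⟨g1, g2⟩
              · exact absurd g1 huv
              · have hab' : a = b' := g1
                have g2' : H.Adj u c' := g2
                refine ⟨c', g2', ?_⟩
                show f (a, c') = 2
                rw [hab']; exact hq'2
        have : romanDomNum H ≤ ∑ u, f (a, u) := romanDomNum_le _ _ hres
        omega
    have hDcard : domNum G ≤ D.card := domNum_le G D hDdom
    have hsum : ∑ p, f p = ∑ a, ∑ u, f (a, u) := Fintype.sum_prod_type f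
    have hwsum : ∑ a : α, (k + (if a ∈ D then 1 else 0)) ≤ ∑ a, ∑ u, f (a, u) := by
      apply Finset.sum_le_sum
      intro a _
      by_cases haD : a ∈ D
      · simp only [if_pos haD]
        exact (Finset.mem_filter.mp haD).2
      · simp only [if_neg haD]
        have := hge_k a; omega
    have hval : ∑ a : α, (k + (if a ∈ D then 1 else 0)) = Fintype.card α * k + D.card := by
      rw [Finset.sum_add_distrib, Finset.sum_const, Finset.card_univ, smul_eq_mul]
      congr 1
      rw [Finset.sum_ite_mem, Finset.univ_inter, Finset.sum_const, smul_eq_mul, mul_one]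
    omega
  rw [hk]
  simp only [Nat.add_sub_cancel]
  omega
end

section
/- Let G be a graph of order n ≥ 2 and let H be a graph with root vertex v and at least two vertices. If there exists a maximum independent set of H not containing the root v, then α(G∘H) = n·α(H). -/
open Finset
open scoped Classical

lemma indep_bddAbove {α : Type*} (G : SimpleGraph α) [Fintype α] :
    BddAbove {k | ∃ S : Finset α, IsIndep G ↑S ∧ S.card = k} := by
  refine ⟨Fintype.card α, ?_⟩
  rintro k ⟨S, -, rfl⟩
  exact S.card_le_univ

lemma indep_nonempty {α : Type*} (G : SimpleGraph α) [Fintype α] :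
    Set.Nonempty {k | ∃ S : Finset α, IsIndep G ↑S ∧ S.card = k} :=
  ⟨0, ∅, by simp [IsIndep], by simp⟩

lemma card_le_indepNum {α : Type*} (G : SimpleGraph α) [Fintype α] {S : Finset α}
    (hS : IsIndep G ↑S) : S.card ≤ indepNum G :=
  le_csSup (indep_bddAbove G) ⟨S, hS, rfl⟩

/-- if some maximum independent set of `H` avoids the root `v`, then
`α(G∘H) = n·α(H)`. -/
theorem stmt9 {α β : Type*} [Fintype α] [Fintype β]
    (G : SimpleGraph α) (H : SimpleGraph β) (v : β)
    (hn : 2 ≤ Fintype.card α) (hm : 2 ≤ Fintype.card β)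
    (hv : ∃ S : Finset β, IsIndep H ↑S ∧ S.card = indepNum H ∧ v ∉ S) :
    indepNum (rootedProd G H v) = Fintype.card α * indepNum H := by
  apply le_antisymm
  · refine csSup_le (indep_nonempty _) ?_
    rintro k ⟨T, hT, rfl⟩
    rw [Finset.card_eq_sum_card_fiberwise (f := Prod.fst) (t := Finset.univ)
      (fun x _ => Finset.mem_univ _)]
    have : (∑ a : α, indepNum H) = Fintype.card α * indepNum H := by
      simp [Finset.sum_const, mul_comm]
    rw [← this]
    refine Finset.sum_le_sum fun a _ => ?_
    set F := T.filter (fun x => x.1 = a) with hF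
    have hinj : Set.InjOn Prod.snd (↑F : Set (α × β)) := by
      intro x hx y hy h
      simp only [hF, Finset.coe_filter, Set.mem_setOf_eq] at hx hy
      exact Prod.ext (hx.2.trans hy.2.symm) h
    rw [← Finset.card_image_of_injOn hinj]
    refine card_le_indepNum H ?_
    intro b hb c hc hadj
    simp only [hF, Finset.coe_image, Set.mem_image, Finset.mem_coe, Finset.mem_filter] at hb hc
    obtain ⟨x, ⟨hxT, hxa⟩, rfl⟩ := hb
    obtain ⟨y, ⟨hyT, hya⟩, rfl⟩ := hc
    exact hT x hxT y hyT (Or.inr ⟨hxa.trans hya.symm, hadj⟩)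
  · obtain ⟨S, hS, hcard, hvS⟩ := hv
    have : IsIndep (rootedProd G H v) ↑((Finset.univ : Finset α) ×ˢ S) := by
      rintro x hx y hy (⟨h1, h2, -⟩ | ⟨-, hadj⟩)
      · simp only [Finset.coe_product, Set.mem_prod, Finset.mem_coe] at hx
        exact hvS (h1 ▸ hx.2)
      · simp only [Finset.coe_product, Set.mem_prod, Finset.mem_coe] at hx hy
        exact hS _ hx.2 _ hy.2 hadj
    have h := le_csSup (indep_bddAbove (rootedProd G H v)) ⟨_, this, rfl⟩
    rwa [Finset.card_product, Finset.card_univ, hcard] at h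
end

section
/- Let G be a graph of order n ≥ 2 and let H be a graph with root vertex v and at least two vertices. If the root v belongs to every maximum independent set of H, then α(G∘H) = n·(α(H) − 1) + α(G). -/
open Finset
open scoped Classical

lemma indep_card_le {α : Type*} [Fintype α] (G : SimpleGraph α) (S : Finset α)
    (h : IsIndep G ↑S) : S.card ≤ indepNum G :=
  le_csSup ⟨Fintype.card α, by rintro k ⟨T, _, rfl⟩; exact T.card_le_univ⟩ ⟨S, h, rfl⟩

lemma exists_max_indep {α : Type*} [Fintype α] (G : SimpleGraph α) :
    ∃ S : Finset α, IsIndep G ↑S ∧ S.card = indepNum G := by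
  have hne : {k | ∃ S : Finset α, IsIndep G ↑S ∧ S.card = k}.Nonempty :=
    ⟨0, ∅, by simp [IsIndep], Finset.card_empty⟩
  have hbdd : BddAbove {k | ∃ S : Finset α, IsIndep G ↑S ∧ S.card = k} :=
    ⟨Fintype.card α, by rintro k ⟨T, _, rfl⟩; exact T.card_le_univ⟩
  exact Nat.sSup_mem hne hbdd

/-- if the root `v` belongs to every maximum independent set of `H`, then
`α(G∘H) = n·(α(H) − 1) + α(G)`. -/
theorem stmt10 {α β : Type*} [Fintype α] [Fintype β]
    (G : SimpleGraph α) (H : SimpleGraph β) (v : β)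
    (hn : 2 ≤ Fintype.card α) (hm : 2 ≤ Fintype.card β)
    (hv : ∀ S : Finset β, IsIndep H ↑S → S.card = indepNum H → v ∈ S) :
    indepNum (rootedProd G H v) = Fintype.card α * (indepNum H - 1) + indepNum G := by
  classical
  obtain ⟨SG, hSGi, hSGc⟩ := exists_max_indep G
  obtain ⟨SH, hSHi, hSHc⟩ := exists_max_indep H
  have hvSH : v ∈ SH := hv SH hSHi hSHc
  set h := indepNum H with hh
  have h1 : 1 ≤ h := by
    have := indep_card_le H {v} (by simp [IsIndep])
    simpa using this
  apply le_antisymm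
  · -- upper bound
    obtain ⟨S, hSi, hSc⟩ := exists_max_indep (rootedProd G H v)
    rw [← hSc]
    set T := Finset.univ.filter (fun a : α => (a, v) ∈ S) with hT
    have hTi : IsIndep G ↑T := by
      intro a ha b hb hab
      simp only [hT, Finset.coe_filter, Set.mem_setOf_eq, Finset.mem_univ, true_and] at ha hb
      exact hSi (a, v) ha (b, v) hb (Or.inl ⟨rfl, rfl, hab⟩)
    have hTc : T.card ≤ indepNum G := indep_card_le G T hTi
    have key : ∀ a : α, (S.filter (fun x => x.1 = a)).card
        ≤ (h - 1) + (if a ∈ T then 1 else 0) := by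
      intro a
      set F := (S.filter (fun x => x.1 = a)).image Prod.snd with hF
      have himg : F.card = (S.filter (fun x => x.1 = a)).card := by
        apply Finset.card_image_of_injOn
        intro x hx y hy hxy
        simp only [Finset.coe_filter, Set.mem_setOf_eq] at hx hy
        exact Prod.ext (hx.2.trans hy.2.symm) hxy
      have hmemF : ∀ b : β, b ∈ F ↔ (a, b) ∈ S := by
        intro b
        constructor
        · intro hb
          simp only [hF, Finset.mem_image, Finset.mem_filter] at hb
          obtain ⟨x, ⟨hxS, hx1⟩, hx2⟩ := hb
          have : x = (a, b) := Prod.ext hx1 hx2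
          rwa [this] at hxS
        · intro hb
          simp only [hF, Finset.mem_image, Finset.mem_filter]
          exact ⟨(a, b), ⟨hb, rfl⟩, rfl⟩
      have hFi : IsIndep H ↑F := by
        intro b hb c hc hbc
        rw [Finset.mem_coe, hmemF] at hb hc
        exact hSi (a, b) hb (a, c) hc (Or.inr ⟨rfl, hbc⟩)
      have hFle : F.card ≤ h := indep_card_le H F hFi
      by_cases haT : a ∈ T
      · rw [← himg]; simp [haT]; omega
      · have hvF : v ∉ F := by
          rw [hmemF]
          intro hc
          exact haT (by simp [hT, hc])
        have : F.card ≠ h := by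
          intro hc
          exact hvF (hv F hFi hc)
        rw [← himg]; simp [haT]; omega
    calc S.card = ∑ a : α, (S.filter (fun x => x.1 = a)).card :=
        Finset.card_eq_sum_card_fiberwise (fun x _ => Finset.mem_univ x.1)
      _ ≤ ∑ a : α, ((h - 1) + (if a ∈ T then 1 else 0)) :=
        Finset.sum_le_sum (fun a _ => key a)
      _ = Fintype.card α * (h - 1) + T.card := by
          rw [Finset.sum_add_distrib, Finset.sum_const, smul_eq_mul, Finset.card_univ,
            Finset.sum_ite_mem, Finset.univ_inter, Finset.sum_const, smul_eq_mul, mul_one]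
      _ ≤ Fintype.card α * (h - 1) + indepNum G := by omega
  · -- lower bound
    set S : Finset (α × β) := Finset.univ ×ˢ (SH.erase v) ∪ SG ×ˢ {v} with hS
    have hmemS : ∀ x : α × β, x ∈ S ↔ (x.2 ∈ SH.erase v ∨ (x.1 ∈ SG ∧ x.2 = v)) := by
      intro x
      rw [hS, Finset.mem_union, Finset.mem_product, Finset.mem_product]
      simp
    have hSi : IsIndep (rootedProd G H v) ↑S := by
      intro x hx y hy hadj
      rw [Finset.mem_coe, hmemS] at hx hy
      rcases hadj with ⟨hx2, hy2, hG⟩ | ⟨hx1, hH⟩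
      · have hxG : x.1 ∈ SG := by
          rcases hx with hx | hx
          · exact absurd hx2 (by simpa using (Finset.mem_erase.mp hx).1)
          · exact hx.1
        have hyG : y.1 ∈ SG := by
          rcases hy with hy | hy
          · exact absurd hy2 (by simpa using (Finset.mem_erase.mp hy).1)
          · exact hy.1
        exact hSGi x.1 hxG y.1 hyG hG
      · have hxH : x.2 ∈ SH := by
          rcases hx with hx | hx
          · exact Finset.mem_of_mem_erase hx
          · rw [hx.2]; exact hvSH
        have hyH : y.2 ∈ SH := by
          rcases hy with hy | hy
          · exact Finset.mem_of_mem_erase hy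
          · rw [hy.2]; exact hvSH
        exact hSHi x.2 hxH y.2 hyH hH
    have hSc : S.card = Fintype.card α * (h - 1) + indepNum G := by
      rw [hS, Finset.card_union_of_disjoint, Finset.card_product, Finset.card_product]
      · rw [Finset.card_erase_of_mem hvSH, hSHc, Finset.card_univ, Finset.card_singleton,
          mul_one, hSGc]
      · rw [Finset.disjoint_left]
        intro x hx hx'
        simp only [Finset.mem_product, Finset.mem_erase, Finset.mem_singleton] at hx hx'
        exact hx.2.1 hx'.2
    rw [← hSc]
    exact indep_card_le _ S hSi
end

section
/- Let G be a graph and let v be a vertex of G. If v does not belong to any minimum independent dominating set of G, then i(G − v) = i(G). -/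
open Finset
open scoped Classical

lemma exists_ids {α : Type*} [Fintype α] (G : SimpleGraph α) :
    ∃ S : Finset α, IsDomSet G ↑S ∧ IsIndep G ↑S := by
  classical
  obtain ⟨S, hS, hmax⟩ := Finset.exists_max_image
    (Finset.univ.filter (fun S : Finset α => IsIndep G ↑S)) Finset.card
    ⟨∅, by simp [IsIndep]⟩
  have hSind : IsIndep G ↑S := (Finset.mem_filter.mp hS).2
  refine ⟨S, ?_, hSind⟩
  intro w hw
  by_contra h
  push_neg at h
  have hwS : w ∉ S := hw
  have hins : IsIndep G ↑(insert w S) := by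
    intro a ha b hb
    simp only [Finset.coe_insert, Set.mem_insert_iff, Finset.mem_coe] at ha hb
    rcases ha with rfl | ha
    · rcases hb with rfl | hb
      · exact G.loopless.irrefl _
      · intro hab; exact h b (by exact hb) hab.symm
    · rcases hb with rfl | hb
      · exact fun hab => h a ha hab
      · exact hSind a ha b hb
  have hmem : insert w S ∈ Finset.univ.filter (fun S : Finset α => IsIndep G ↑S) :=
    Finset.mem_filter.mpr ⟨Finset.mem_univ _, hins⟩
  have := hmax _ hmem
  rw [Finset.card_insert_of_notMem hwS] at this
  omega

lemma ids_mem {α : Type*} [Fintype α] (G : SimpleGraph α) :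
    indepDomNum G ∈ {k | ∃ S : Finset α, IsDomSet G ↑S ∧ IsIndep G ↑S ∧ S.card = k} := by
  apply Nat.sInf_mem
  obtain ⟨S, h1, h2⟩ := exists_ids G
  exact ⟨S.card, S, h1, h2, rfl⟩

/-- if `v` belongs to no minimum independent dominating set of `G`, then
`i(G − v) = i(G)`. -/
theorem stmt12 {α : Type*} [Fintype α] (G : SimpleGraph α) (v : α)
    (hv : ∀ S : Finset α, IsDomSet G ↑S → IsIndep G ↑S → S.card = indepDomNum G → v ∉ S) :
    indepDomNum (deleteVert G v) = indepDomNum G := by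
  classical
  apply le_antisymm
  · -- take a minimum ids D of G; it avoids v, so it works in G - v
    obtain ⟨D, hdom, hind, hcard⟩ := ids_mem G
    have hvD : v ∉ D := hv D hdom hind hcard
    set D' : Finset {u : α // u ≠ v} := D.subtype (· ≠ v) with hD'
    have hmem : ∀ a : {u : α // u ≠ v}, a ∈ D' ↔ (a : α) ∈ D := by
      intro a; simp [hD']
    have hcard' : D'.card = D.card := by
      rw [hD', Finset.card_subtype, Finset.filter_true_of_mem]
      intro x hx hxv; subst hxv; exact hvD hx
    apply Nat.sInf_le
    refine ⟨D', ?_, ?_, by rw [hcard', hcard]⟩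
    · rintro ⟨u, hu⟩ hnot
      have huD : u ∉ D := fun h => hnot ((hmem ⟨u, hu⟩).mpr h)
      obtain ⟨w, hwD, hadj⟩ := hdom u huD
      have hwv : w ≠ v := fun h => hvD (h ▸ hwD)
      exact ⟨⟨w, hwv⟩, (hmem ⟨w, hwv⟩).mpr hwD, hadj⟩
    · rintro ⟨a, ha⟩ haD ⟨b, hb⟩ hbD
      exact hind a ((hmem ⟨a, ha⟩).mp haD) b ((hmem ⟨b, hb⟩).mp hbD)
  · -- take a minimum ids D' of G - v
    obtain ⟨D', hdom, hind, hcard⟩ := ids_mem (deleteVert G v)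
    set E : Finset α := D'.map ⟨Subtype.val, Subtype.val_injective⟩ with hE
    have hmemE : ∀ u : α, u ∈ E ↔ ∃ h : u ≠ v, (⟨u, h⟩ : {u : α // u ≠ v}) ∈ D' := by
      intro u
      simp only [hE, Finset.mem_map, Function.Embedding.coeFn_mk]
      constructor
      · rintro ⟨⟨a, ha⟩, haD, rfl⟩; exact ⟨ha, haD⟩
      · rintro ⟨h, hD⟩; exact ⟨⟨u, h⟩, hD, rfl⟩
    have hcardE : E.card = D'.card := Finset.card_map _
    have hvE : v ∉ E := by
      rw [hmemE]; rintro ⟨h, -⟩; exact h rfl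
    have hEind : IsIndep G ↑E := by
      intro a ha b hb
      rw [Finset.mem_coe, hmemE] at ha hb
      obtain ⟨ha', haD⟩ := ha; obtain ⟨hb', hbD⟩ := hb
      exact hind _ haD _ hbD
    have hEdom : ∀ w, w ∉ E → w ≠ v → ∃ u ∈ (E : Set α), G.Adj u w := by
      intro w hwE hwv
      have : (⟨w, hwv⟩ : {u : α // u ≠ v}) ∉ D' := by
        intro h; exact hwE ((hmemE w).mpr ⟨hwv, h⟩)
      obtain ⟨⟨u, hu⟩, huD, hadj⟩ := hdom _ this
      exact ⟨u, (hmemE u).mpr ⟨hu, huD⟩, hadj⟩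
    by_cases hcase : ∃ u ∈ E, G.Adj u v
    · -- E dominates G
      have : indepDomNum G ≤ E.card := by
        apply Nat.sInf_le
        refine ⟨E, ?_, hEind, rfl⟩
        intro w hwE
        by_cases hwv : w = v
        · obtain ⟨u, huE, hadj⟩ := hcase; exact ⟨u, huE, hwv ▸ hadj⟩
        · exact hEdom w hwE hwv
      omega
    · push_neg at hcase
      have hins : IsDomSet G ↑(insert v E) ∧ IsIndep G ↑(insert v E) := by
        constructor
        · intro w hw
          simp only [Finset.coe_insert, Set.mem_insert_iff, Finset.mem_coe, not_or] at hw
          obtain ⟨u, hu, hadj⟩ := hEdom w hw.2 hw.1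
          exact ⟨u, by simp only [Finset.coe_insert, Set.mem_insert_iff]; right; exact hu, hadj⟩
        · intro a ha b hb
          simp only [Finset.coe_insert, Set.mem_insert_iff, Finset.mem_coe] at ha hb
          rcases ha with rfl | ha
          · rcases hb with rfl | hb
            · exact G.loopless.irrefl _
            · intro hab; exact hcase b hb hab.symm
          · rcases hb with rfl | hb
            · intro hab; exact hcase a ha hab
            · exact hEind a ha b hb
      have hle : indepDomNum G ≤ E.card + 1 := by
        apply Nat.sInf_le
        exact ⟨insert v E, hins.1, hins.2, by rw [Finset.card_insert_of_notMem hvE]⟩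
      rcases Nat.lt_or_ge (indepDomNum G) (E.card + 1) with h | h
      · omega
      · have heq : (insert v E).card = indepDomNum G := by
          rw [Finset.card_insert_of_notMem hvE]; omega
        exact absurd (Finset.mem_insert_self v E) (hv _ hins.1 hins.2 heq)
end

section
/- Let G be a graph of order n ≥ 2 and let H be a graph with root vertex v and at least two vertices. Then n·(i(H) − 1) + i(G) ≤ i(G∘H) ≤ i(H)·α(G) + i(H − v)·(n − α(G)). -/
open Finset
open scoped Classical

section MyAuxLemmas


variable {γ : Type*} [Fintype γ]

lemma indep_insert {K : SimpleGraph γ} {S : Finset γ} {x : γ}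
    (hS : IsIndep K ↑S) (hx : ∀ w ∈ S, ¬ K.Adj x w) :
    IsIndep K ↑(insert x S) := by
  intro u hu w hw hadj
  simp only [Finset.coe_insert, Set.mem_insert_iff, Finset.mem_coe] at hu hw
  rcases hu with rfl | hu
  · rcases hw with rfl | hw
    · exact K.loopless.irrefl _ hadj
    · exact hx _ hw hadj
  · rcases hw with rfl | hw
    · exact hx _ hu hadj.symm
    · exact hS u hu w hw hadj

lemma exists_inddom (K : SimpleGraph γ) :
    ∃ S : Finset γ, IsDomSet K ↑S ∧ IsIndep K ↑S := by
  obtain ⟨S, hSmem, hSmax⟩ := Finset.exists_max_image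
    ((univ : Finset (Finset γ)).filter fun S : Finset γ => IsIndep K ↑S) (fun S => S.card)
    ⟨∅, by simp [IsIndep]⟩
  simp only [mem_filter, mem_univ, true_and] at hSmem
  refine ⟨S, ?_, hSmem⟩
  intro x hx
  by_contra hcon
  push_neg at hcon
  have hxS : x ∉ S := by simpa using hx
  have hind : IsIndep K ↑(insert x S) := indep_insert hSmem
    (fun w hw hadj => hcon w (by simpa using hw) hadj.symm)
  have h2 := hSmax (insert x S) (by simp only [mem_filter, mem_univ, true_and]; exact hind)
  rw [Finset.card_insert_of_notMem hxS] at h2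
  omega

lemma idn_le (K : SimpleGraph γ) {S : Finset γ} (h1 : IsDomSet K ↑S) (h2 : IsIndep K ↑S) :
    indepDomNum K ≤ S.card :=
  Nat.sInf_le ⟨S, h1, h2, rfl⟩

lemma idn_spec (K : SimpleGraph γ) :
    ∃ S : Finset γ, IsDomSet K ↑S ∧ IsIndep K ↑S ∧ S.card = indepDomNum K := by
  have hne : {k | ∃ S : Finset γ, IsDomSet K ↑S ∧ IsIndep K ↑S ∧ S.card = k}.Nonempty := by
    obtain ⟨S, h1, h2⟩ := exists_inddom K
    exact ⟨S.card, S, h1, h2, rfl⟩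
  exact Nat.sInf_mem hne

lemma indepNum_bdd (K : SimpleGraph γ) :
    BddAbove {k | ∃ S : Finset γ, IsIndep K ↑S ∧ S.card = k} := by
  refine ⟨Fintype.card γ, ?_⟩
  rintro k ⟨T, _, rfl⟩
  simpa using T.card_le_univ

lemma le_indepNum (K : SimpleGraph γ) {S : Finset γ} (h : IsIndep K ↑S) :
    S.card ≤ indepNum K :=
  le_csSup (indepNum_bdd K) ⟨S, h, rfl⟩

lemma indepNum_spec (K : SimpleGraph γ) :
    ∃ S : Finset γ, IsIndep K ↑S ∧ IsDomSet K ↑S ∧ S.card = indepNum K := by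
  have hmem : indepNum K ∈ {k | ∃ S : Finset γ, IsIndep K ↑S ∧ S.card = k} :=
    Nat.sSup_mem ⟨0, ⟨∅, by simp [IsIndep], by simp⟩⟩ (indepNum_bdd K)
  obtain ⟨S, hSi, hScard⟩ := hmem
  refine ⟨S, hSi, ?_, hScard⟩
  intro x hx
  by_contra hcon
  push_neg at hcon
  have hxS : x ∉ S := by simpa using hx
  have hind : IsIndep K ↑(insert x S) := indep_insert hSi
    (fun w hw hadj => hcon w (by simpa using hw) hadj.symm)
  have h2 := le_indepNum K hind
  rw [Finset.card_insert_of_notMem hxS] at h2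
  omega


lemma idn_pos {γ : Type*} [Fintype γ] [Nonempty γ] (K : SimpleGraph γ) :
    1 ≤ indepDomNum K := by
  obtain ⟨S, hd, hi, hc⟩ := idn_spec K
  rcases Nat.eq_zero_or_pos S.card with h0 | h1
  · exfalso
    have hS : S = ∅ := Finset.card_eq_zero.1 h0
    obtain ⟨u, hu, _⟩ := hd (Classical.arbitrary γ) (by simp [hS])
    simp [hS] at hu
  · omega

lemma upper_construct {α β : Type*} [Fintype α] [Fintype β]
    (G : SimpleGraph α) (H : SimpleGraph β) (v : β)
    (A : Finset α) (D W : Finset β)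
    (hAi : IsIndep G ↑A) (hAd : IsDomSet G ↑A)
    (hDd : IsDomSet H ↑D) (hDi : IsIndep H ↑D)
    (hWv : v ∉ W) (hWi : IsIndep H ↑W)
    (hWd : ∀ u ∉ W, u ≠ v → ∃ w ∈ W, H.Adj w u)
    (hkey : v ∈ D ∨ ∃ w ∈ W, H.Adj w v) :
    indepDomNum (rootedProd G H v) ≤
      A.card * D.card + (Fintype.card α - A.card) * W.card := by
  set S : Finset (α × β) := A ×ˢ D ∪ Aᶜ ×ˢ W with hSdef
  have hmem : ∀ p : α × β, p ∈ S ↔ (p.1 ∈ A ∧ p.2 ∈ D) ∨ (p.1 ∉ A ∧ p.2 ∈ W) := by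
    intro p
    simp [hSdef, Finset.mem_union, Finset.mem_product, Finset.mem_compl]
  have hcard : S.card = A.card * D.card + (Fintype.card α - A.card) * W.card := by
    rw [hSdef, Finset.card_union_of_disjoint, Finset.card_product, Finset.card_product,
      Finset.card_compl]
    rw [Finset.disjoint_left]
    intro p hp hp'
    rw [Finset.mem_product] at hp
    rw [Finset.mem_product, Finset.mem_compl] at hp'
    exact hp'.1 hp.1
  rw [← hcard]
  apply idn_le (rootedProd G H v)
  · -- dominating
    intro p hp
    rw [Finset.mem_coe, hmem] at hp
    push_neg at hp
    by_cases hpa : p.1 ∈ A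
    · have hpD : p.2 ∉ D := hp.1 hpa
      obtain ⟨d, hd, hadj⟩ := hDd p.2 (by simpa using hpD)
      refine ⟨(p.1, d), ?_, Or.inr ⟨rfl, hadj⟩⟩
      rw [Finset.mem_coe, hmem]
      exact Or.inl ⟨hpa, by simpa using hd⟩
    · have hpW : p.2 ∉ W := hp.2 hpa
      by_cases hpv : p.2 = v
      · rcases hkey with hvD | ⟨w, hw, hadj⟩
        · obtain ⟨b, hb, hadj⟩ := hAd p.1 (by simpa using hpa)
          refine ⟨(b, v), ?_, Or.inl ⟨rfl, hpv, by simpa using hadj⟩⟩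
          rw [Finset.mem_coe, hmem]
          exact Or.inl ⟨by simpa using hb, hvD⟩
        · refine ⟨(p.1, w), ?_, Or.inr ⟨rfl, hpv ▸ hadj⟩⟩
          rw [Finset.mem_coe, hmem]
          exact Or.inr ⟨hpa, hw⟩
      · obtain ⟨w, hw, hadj⟩ := hWd p.2 hpW hpv
        refine ⟨(p.1, w), ?_, Or.inr ⟨rfl, hadj⟩⟩
        rw [Finset.mem_coe, hmem]
        exact Or.inr ⟨hpa, hw⟩
  · -- independent
    intro p hp q hq hadj
    rw [Finset.mem_coe, hmem] at hp hq
    rcases hadj with ⟨hp2, hq2, hG⟩ | ⟨h1, hH⟩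
    · have hpA : p.1 ∈ A := by
        rcases hp with ⟨h, _⟩ | ⟨_, h⟩
        · exact h
        · exact absurd (hp2 ▸ h) hWv
      have hqA : q.1 ∈ A := by
        rcases hq with ⟨h, _⟩ | ⟨_, h⟩
        · exact h
        · exact absurd (hq2 ▸ h) hWv
      exact hAi p.1 (by simpa using hpA) q.1 (by simpa using hqA) hG
    · rcases hp with ⟨hpA, hpD⟩ | ⟨hpA, hpW⟩ <;> rcases hq with ⟨hqA, hqD⟩ | ⟨hqA, hqW⟩
      · exact hDi p.2 (by simpa using hpD) q.2 (by simpa using hqD) hH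
      · exact hqA (h1 ▸ hpA)
      · exact hpA (h1 ▸ hqA)
      · exact hWi p.2 (by simpa using hpW) q.2 (by simpa using hqW) hH

lemma lower_bound {α β : Type*} [Fintype α] [Fintype β]
    (G : SimpleGraph α) (H : SimpleGraph β) (v : β) (hH1 : 1 ≤ indepDomNum H) :
    Fintype.card α * (indepDomNum H - 1) + indepDomNum G ≤
      indepDomNum (rootedProd G H v) := by
  obtain ⟨S, hSd, hSi, hScard⟩ := idn_spec (rootedProd G H v)
  set Sa : α → Finset β := fun a => (S.filter fun p => p.1 = a).image Prod.snd with hSadef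
  have hmemSa : ∀ a u, u ∈ Sa a ↔ (a, u) ∈ S := by
    intro a u
    simp only [hSadef, Finset.mem_image, Finset.mem_filter]
    constructor
    · rintro ⟨p, ⟨hp, rfl⟩, rfl⟩
      exact hp
    · intro h
      exact ⟨(a, u), ⟨h, rfl⟩, rfl⟩
  have hsum : ∑ a, (Sa a).card = S.card := by
    have h1 : ∀ a, (Sa a).card = (S.filter fun p => p.1 = a).card := by
      intro a
      apply Finset.card_image_of_injOn
      intro p hp q hq hpq
      simp only [Finset.mem_coe, Finset.mem_filter] at hp hq
      exact Prod.ext (hp.2.trans hq.2.symm) hpq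
    rw [Finset.sum_congr rfl fun a _ => h1 a]
    exact (Finset.card_eq_sum_card_fiberwise (fun p _ => Finset.mem_univ p.1)).symm
  have hdom : ∀ a u, (a, u) ∉ S → u ≠ v → ∃ w ∈ Sa a, H.Adj w u := by
    intro a u h hne
    obtain ⟨p, hp, hadj⟩ := hSd (a, u) (by simpa using h)
    rcases hadj with ⟨h1, h2, h3⟩ | ⟨h1, hH⟩
    · exact absurd h2 hne
    · refine ⟨p.2, (hmemSa a p.2).2 ?_, hH⟩
      have h1' : p.1 = a := h1
      rw [← h1']
      simpa using hp
  have hindep : ∀ a, IsIndep H ↑(Sa a) := by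
    intro a u hu w hw hadj
    rw [Finset.mem_coe, hmemSa] at hu hw
    exact hSi (a, u) (by simpa using hu) (a, w) (by simpa using hw) (Or.inr ⟨rfl, hadj⟩)
  set Astar : Finset α := univ.filter (fun a => v ∈ Sa a ∨ ∃ w ∈ Sa a, H.Adj w v) with hAdef
  have h_in : ∀ a ∈ Astar, indepDomNum H ≤ (Sa a).card := by
    intro a ha
    rw [hAdef, Finset.mem_filter] at ha
    apply idn_le H ?_ (hindep a)
    intro u hu
    rw [Finset.mem_coe, hmemSa] at hu
    by_cases huv : u = v
    · subst huv
      rcases ha.2 with hv | ⟨w, hw, hadj⟩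
      · exact absurd ((hmemSa a u).1 hv) hu
      · exact ⟨w, by simpa using hw, hadj⟩
    · obtain ⟨w, hw, hadj⟩ := hdom a u hu huv
      exact ⟨w, by simpa using hw, hadj⟩
  have h_out : ∀ a ∉ Astar, indepDomNum H ≤ (Sa a).card + 1 := by
    intro a ha
    rw [hAdef, Finset.mem_filter] at ha
    push_neg at ha
    obtain ⟨hv, hnadj⟩ := ha (Finset.mem_univ a)
    have hvSa : v ∉ Sa a := hv
    have hcard : (insert v (Sa a)).card = (Sa a).card + 1 :=
      Finset.card_insert_of_notMem hvSa
    rw [← hcard]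
    apply idn_le H
    · intro u hu
      simp only [Finset.coe_insert, Set.mem_insert_iff, Finset.mem_coe, not_or] at hu
      obtain ⟨huv, huSa⟩ := hu
      have : (a, u) ∉ S := fun h => huSa ((hmemSa a u).2 h)
      obtain ⟨w, hw, hadj⟩ := hdom a u this huv
      exact ⟨w, by simp [hw], hadj⟩
    · exact indep_insert (hindep a) (fun w hw hadj => hnadj w hw hadj.symm)
  have hsum_ge : Fintype.card α * (indepDomNum H - 1) + Astar.card ≤ S.card := by
    rw [← hsum]
    calc Fintype.card α * (indepDomNum H - 1) + Astar.card
        = ∑ a : α, ((indepDomNum H - 1) + if a ∈ Astar then 1 else 0) := by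
          rw [Finset.sum_add_distrib, Finset.sum_const, Finset.card_univ, smul_eq_mul,
            Finset.sum_boole]
          simp [hAdef, Finset.filter_filter]
      _ ≤ ∑ a, (Sa a).card := by
          apply Finset.sum_le_sum
          intro a _
          by_cases h : a ∈ Astar
          · rw [if_pos h]
            refine le_trans ?_ (h_in a h)
            omega
          · rw [if_neg h, add_zero]
            exact Nat.sub_le_of_le_add (h_out a h)
  -- i(G) ≤ Astar.card
  have hiG : indepDomNum G ≤ Astar.card := by
    set R : Finset α := univ.filter (fun a => v ∈ Sa a) with hRdef
    have hRsub : R ⊆ Astar := by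
      intro a ha
      rw [hRdef, Finset.mem_filter] at ha
      rw [hAdef, Finset.mem_filter]
      exact ⟨Finset.mem_univ a, Or.inl ha.2⟩
    have hRind : IsIndep G ↑R := by
      intro a ha b hb hadj
      rw [Finset.mem_coe, hRdef, Finset.mem_filter] at ha hb
      exact hSi (a, v) (by simpa using (hmemSa a v).1 ha.2)
        (b, v) (by simpa using (hmemSa b v).1 hb.2) (Or.inl ⟨rfl, rfl, hadj⟩)
    obtain ⟨M, hMmem, hMmax⟩ := Finset.exists_max_image
      ((univ : Finset (Finset α)).filter fun M : Finset α =>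
        R ⊆ M ∧ M ⊆ Astar ∧ IsIndep G ↑M) (fun M => M.card)
      ⟨R, by simp only [Finset.mem_filter, Finset.mem_univ, true_and]
             exact ⟨Finset.Subset.refl R, hRsub, hRind⟩⟩
    simp only [Finset.mem_filter, Finset.mem_univ, true_and] at hMmem
    obtain ⟨hRM, hMA, hMi⟩ := hMmem
    have hMdom : IsDomSet G ↑M := by
      intro x hx
      have hxM : x ∉ M := by simpa using hx
      by_contra hcon
      push_neg at hcon
      by_cases hxA : x ∈ Astar
      · have hind : IsIndep G ↑(insert x M) := indep_insert hMi
          (fun w hw hadj => hcon w (by simpa using hw) hadj.symm)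
        have h2 := hMmax (insert x M) (by
          simp only [Finset.mem_filter, Finset.mem_univ, true_and]
          refine ⟨hRM.trans (Finset.subset_insert x M), ?_, hind⟩
          intro y hy
          rcases Finset.mem_insert.1 hy with rfl | hy
          · exact hxA
          · exact hMA hy)
        rw [Finset.card_insert_of_notMem hxM] at h2
        omega
      · rw [hAdef, Finset.mem_filter] at hxA
        push_neg at hxA
        obtain ⟨hv, hnadj⟩ := hxA (Finset.mem_univ x)
        have hxvS : (x, v) ∉ S := fun h => hv ((hmemSa x v).2 h)
        obtain ⟨p, hp, hadj⟩ := hSd (x, v) (by simpa using hxvS)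
        rcases hadj with ⟨h1, h2, h3⟩ | ⟨h1, hH⟩
        · have hp1R : p.1 ∈ R := by
            rw [hRdef, Finset.mem_filter]
            refine ⟨Finset.mem_univ _, (hmemSa p.1 v).2 ?_⟩
            have h1' : p.2 = v := h1
            have hpp : (p.1, v) = p := by rw [← h1']
            rw [hpp]
            simpa using hp
          exact hcon p.1 (by simpa using hRM hp1R) h3
        · have h1' : p.1 = x := h1
          have hin : p.2 ∈ Sa x := by
            refine (hmemSa x p.2).2 ?_
            rw [← h1']
            simpa using hp
          exact hnadj p.2 hin hH
    have := idn_le G hMdom hMi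
    exact this.trans (Finset.card_le_card hMA)
  omega

end MyAuxLemmas

/-- `n·(i(H) − 1) + i(G) ≤ i(G∘H) ≤ i(H)·α(G) + i(H − v)·(n − α(G))`. -/
theorem stmt13 {α β : Type*} [Fintype α] [Fintype β]
    (G : SimpleGraph α) (H : SimpleGraph β) (v : β)
    (hn : 2 ≤ Fintype.card α) (hm : 2 ≤ Fintype.card β) :
    Fintype.card α * (indepDomNum H - 1) + indepDomNum G ≤
        indepDomNum (rootedProd G H v) ∧
    indepDomNum (rootedProd G H v) ≤
      indepDomNum H * indepNum G +
        indepDomNum (deleteVert H v) * (Fintype.card α - indepNum G) := by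
  have hβ : Nonempty β := Fintype.card_pos_iff.1 (by omega)
  constructor
  · exact lower_bound G H v (idn_pos H)
  · obtain ⟨A, hAi, hAd, hAcard⟩ := indepNum_spec G
    obtain ⟨D, hDd, hDi, hDcard⟩ := idn_spec H
    obtain ⟨W', hW'd, hW'i, hW'card⟩ := idn_spec (deleteVert H v)
    set W : Finset β := W'.image Subtype.val with hWdef
    have hWcard : W.card = indepDomNum (deleteVert H v) := by
      rw [hWdef, Finset.card_image_of_injective _ Subtype.val_injective, hW'card]
    have hWv : v ∉ W := by
      simp only [hWdef, Finset.mem_image]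
      rintro ⟨x, _, hx⟩
      exact x.2 hx
    have hmemW : ∀ x : {u : β // u ≠ v}, x.val ∈ W ↔ x ∈ W' := by
      intro x
      simp only [hWdef, Finset.mem_image]
      constructor
      · rintro ⟨y, hy, hxy⟩
        rwa [Subtype.val_injective hxy] at hy
      · intro h
        exact ⟨x, h, rfl⟩
    have hWi : IsIndep H ↑W := by
      intro x hx y hy hadj
      rw [Finset.mem_coe, hWdef, Finset.mem_image] at hx hy
      obtain ⟨x', hx', rfl⟩ := hx
      obtain ⟨y', hy', rfl⟩ := hy
      exact hW'i x' (by simpa using hx') y' (by simpa using hy') hadj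
    have hWd : ∀ u ∉ W, u ≠ v → ∃ w ∈ W, H.Adj w u := by
      intro u hu hne
      have hnW' : (⟨u, hne⟩ : {u : β // u ≠ v}) ∉ W' := fun h => hu ((hmemW ⟨u, hne⟩).2 h)
      obtain ⟨w, hw, hadj⟩ := hW'd ⟨u, hne⟩ (by simpa using hnW')
      exact ⟨w.val, (hmemW w).2 (by simpa using hw), hadj⟩
    suffices h : indepDomNum (rootedProd G H v) ≤
        indepNum G * indepDomNum H +
          (Fintype.card α - indepNum G) * indepDomNum (deleteVert H v) by
      calc indepDomNum (rootedProd G H v)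
          ≤ indepNum G * indepDomNum H +
            (Fintype.card α - indepNum G) * indepDomNum (deleteVert H v) := h
        _ = indepDomNum H * indepNum G +
            indepDomNum (deleteVert H v) * (Fintype.card α - indepNum G) := by ring
    by_cases hvD : v ∈ D
    · have key := upper_construct G H v A D W hAi hAd hDd hDi hWv hWi hWd (Or.inl hvD)
      rwa [hAcard, hDcard, hWcard] at key
    · by_cases hWadj : ∃ w ∈ W, H.Adj w v
      · have key := upper_construct G H v A D W hAi hAd hDd hDi hWv hWi hWd (Or.inr hWadj)
        rwa [hAcard, hDcard, hWcard] at key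
      · push_neg at hWadj
        obtain ⟨d, hd, hdadj⟩ := hDd v (by simpa using hvD)
        have hDv' : indepDomNum (deleteVert H v) ≤ D.card := by
          have hcard : (D.subtype (· ≠ v)).card = D.card := by
            rw [Finset.card_subtype, Finset.filter_true_of_mem]
            intro x hx
            exact fun h => hvD (h ▸ hx)
          rw [← hcard]
          apply idn_le (deleteVert H v)
          · intro u hu
            have hu' : u ∉ D.subtype (· ≠ v) := by simpa using hu
            have huD : u.val ∉ D := fun h => hu' (Finset.mem_subtype.2 h)
            obtain ⟨e, he, headj⟩ := hDd u.val (by simpa using huD)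
            have heD : e ∈ D := by simpa using he
            have hev : e ≠ v := fun h => hvD (h ▸ heD)
            refine ⟨⟨e, hev⟩, ?_, headj⟩
            simp only [Finset.mem_coe, Finset.mem_subtype]
            exact heD
          · intro x hx y hy hadj
            rw [Finset.mem_coe, Finset.mem_subtype] at hx hy
            exact hDi x.val (by simpa using hx) y.val (by simpa using hy) hadj
        have hinsd : IsDomSet H ↑(insert v W) := by
          intro u hu
          simp only [Finset.coe_insert, Set.mem_insert_iff, Finset.mem_coe, not_or] at hu
          obtain ⟨w, hw, hadj⟩ := hWd u hu.2 hu.1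
          exact ⟨w, by simp [hw], hadj⟩
        have hinsi : IsIndep H ↑(insert v W) :=
          indep_insert hWi (fun w hw hadj => hWadj w hw hadj.symm)
        have hWD : indepDomNum H ≤ W.card + 1 := by
          rw [← Finset.card_insert_of_notMem hWv]
          exact idn_le H hinsd hinsi
        by_cases heq : indepDomNum (deleteVert H v) = indepDomNum H
        · have hDd' : ∀ u ∉ D, u ≠ v → ∃ w ∈ D, H.Adj w u := fun u hu _ =>
            hDd u (by simpa using hu)
          have key := upper_construct G H v A D D hAi hAd hDd hDi hvD hDi hDd'
            (Or.inr ⟨d, hd, hdadj⟩)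
          rw [hAcard, hDcard] at key
          have h2 : (Fintype.card α - indepNum G) * indepDomNum H =
              (Fintype.card α - indepNum G) * indepDomNum (deleteVert H v) := by
            rw [heq]
          rwa [h2] at key
        · have hiter : indepDomNum (deleteVert H v) + 1 = indepDomNum H := by
            rw [hDcard] at hDv'
            rw [hWcard] at hWD
            omega
          have key := upper_construct G H v A (insert v W) W hAi hAd hinsd hinsi hWv hWi hWd
            (Or.inl (Finset.mem_insert_self v W))
          rw [Finset.card_insert_of_notMem hWv, hAcard, hWcard, hiter] at key
          exact key
end

section
/- For a path graph P_n (n ≥ 2) and the star graph S_{1,m} (m ≥ 2) rooted at its central vertex, the independent domination number of the rooted product satisfies i(P_n ∘ S_{1,m}) = m·n − ⌈n/2⌉·(m − 1). -/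
open Finset
open scoped Classical

lemma auxsum1 (n : ℕ) : ∑ i ∈ Finset.range n, (if i % 2 = 0 then (1:ℕ) else 0) = (n+1)/2 := by
  induction n with
  | zero => simp
  | succ k ih =>
    rw [Finset.sum_range_succ, ih]
    by_cases h : k % 2 = 0 <;> simp [h] <;> omega

/-- for the path `P_n` and the star `S_{1,m}` rooted at its central vertex,
`i(P_n ∘ S_{1,m}) = m·n − ⌈n/2⌉·(m − 1)`. -/
theorem stmt15 (n m : ℕ) (hn : 2 ≤ n) (hm : 2 ≤ m) :
    indepDomNum (rootedProd (SimpleGraph.pathGraph n)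
        (completeBipartiteGraph (Fin 1) (Fin m)) (Sum.inl 0)) =
      m * n - (n + 1) / 2 * (m - 1) := by
  obtain ⟨m', rfl⟩ : ∃ m', m = m' + 1 := ⟨m - 1, by omega⟩
  set m := m' + 1 with hmdef
  set r : Fin 1 ⊕ Fin m := Sum.inl 0 with hr
  set G := rootedProd (SimpleGraph.pathGraph n)
      (completeBipartiteGraph (Fin 1) (Fin m)) r with hGdef
  have hadj : ∀ x y : Fin n × (Fin 1 ⊕ Fin m), G.Adj x y ↔
      (x.2 = r ∧ y.2 = r ∧ (SimpleGraph.pathGraph n).Adj x.1 y.1) ∨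
      (x.1 = y.1 ∧ (completeBipartiteGraph (Fin 1) (Fin m)).Adj x.2 y.2) := fun _ _ => Iff.rfl
  have hone : ∀ c : Fin 1, c = 0 := fun c => Subsingleton.elim c 0
  set K := (n + 1) / 2 with hK
  -- key arithmetic identity
  have harith : ∀ i l : ℕ, i + l = n → i + l * m = m * n - i * m' := by
    intro i l hil
    have h1 : m * n = i * m' + (i + l * m) := by
      rw [← hil, hmdef]; ring
    rw [h1, Nat.add_sub_cancel_left]
  have hsub : (m' + 1) - 1 = m' := by omega
  -- the candidate set
  set evens : Finset (Fin n) := Finset.univ.filter (fun a => a.val % 2 = 0) with hev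
  set odds : Finset (Fin n) := Finset.univ.filter (fun a => ¬ a.val % 2 = 0) with hod
  set leaves : Finset (Fin 1 ⊕ Fin m) := Finset.univ.erase r with hlv
  set D₀ : Finset (Fin n × (Fin 1 ⊕ Fin m)) := evens ×ˢ {r} ∪ odds ×ˢ leaves with hD₀
  have hmem : ∀ p : Fin n × (Fin 1 ⊕ Fin m), p ∈ D₀ ↔
      ((p.1.val % 2 = 0 ∧ p.2 = r) ∨ (p.1.val % 2 = 1 ∧ p.2 ≠ r)) := by
    rintro ⟨a, b⟩
    rw [hD₀, Finset.mem_union, Finset.mem_product, Finset.mem_product]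
    simp only [hev, hod, hlv, Finset.mem_filter, Finset.mem_univ, true_and,
      Finset.mem_singleton, Finset.mem_erase]
    constructor
    · rintro (⟨h1, h2⟩ | ⟨h1, h2⟩)
      · exact Or.inl ⟨h1, h2⟩
      · exact Or.inr ⟨by omega, h2.1⟩
    · rintro (⟨h1, h2⟩ | ⟨h1, h2⟩)
      · exact Or.inl ⟨h1, h2⟩
      · exact Or.inr ⟨by omega, h2, trivial⟩
  -- leaf characterization
  have hleaf : ∀ b : Fin 1 ⊕ Fin m, b ≠ r → ∃ j : Fin m, b = Sum.inr j := by
    intro b hb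
    rcases b with c | j
    · exact absurd (by rw [hone c]) hb
    · exact ⟨j, rfl⟩
  have hcard0 : D₀.card = K + (n / 2) * m := by
    have hdisj : Disjoint (evens ×ˢ ({r} : Finset (Fin 1 ⊕ Fin m))) (odds ×ˢ leaves) := by
      rw [Finset.disjoint_left]
      rintro ⟨a, b⟩ h1 h2
      rw [Finset.mem_product] at h1 h2
      have hb1 : b = r := Finset.mem_singleton.mp h1.2
      have hb2 : b ≠ r := (Finset.mem_erase.mp (hlv ▸ h2.2)).1
      exact hb2 hb1
    rw [hD₀, Finset.card_union_of_disjoint hdisj, Finset.card_product, Finset.card_product]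
    have hce : evens.card = K := by
      rw [hev, hK, ← auxsum1 n, Finset.card_filter, ← Fin.sum_univ_eq_sum_range
        (fun i => if i % 2 = 0 then (1:ℕ) else 0)]
    have hco : odds.card = n / 2 := by
      have : evens.card + odds.card = n := by
        rw [hev, hod, Finset.card_filter_add_card_filter_not, Finset.card_univ,
          Fintype.card_fin]
      omega
    have hcl : leaves.card = m := by
      rw [hlv, Finset.card_erase_of_mem (Finset.mem_univ r), Finset.card_univ]
      simp
    simp [hce, hco, hcl]
  -- D₀ is dominating
  have hdom0 : IsDomSet G ↑D₀ := by
    rintro ⟨a, b⟩ hv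
    rw [Finset.mem_coe, hmem] at hv
    rcases b with c | j
    · -- center, so a must be odd
      rw [hone c] at hv ⊢
      have hv2 : ¬ ((a.val % 2 = 0 ∧ (Sum.inl 0 : Fin 1 ⊕ Fin m) = r) ∨
          (a.val % 2 = 1 ∧ (Sum.inl 0 : Fin 1 ⊕ Fin m) ≠ r)) := hv
      have ha : a.val % 2 = 1 := by
        by_contra h
        exact hv2 (Or.inl ⟨by omega, rfl⟩)
      refine ⟨(a, Sum.inr ⟨0, by omega⟩), ?_, ?_⟩
      · rw [Finset.mem_coe, hmem]
        exact Or.inr ⟨ha, by simp [hr]⟩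
      · exact Or.inr ⟨rfl, by simp⟩
    · -- leaf, so a must be even
      have hv2 : ¬ ((a.val % 2 = 0 ∧ (Sum.inr j : Fin 1 ⊕ Fin m) = r) ∨
          (a.val % 2 = 1 ∧ (Sum.inr j : Fin 1 ⊕ Fin m) ≠ r)) := hv
      have ha : a.val % 2 = 0 := by
        by_contra h
        exact hv2 (Or.inr ⟨by omega, by simp [hr]⟩)
      refine ⟨(a, r), ?_, ?_⟩
      · rw [Finset.mem_coe, hmem]; exact Or.inl ⟨ha, rfl⟩
      · exact Or.inr ⟨rfl, by simp [hr]⟩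
  -- D₀ is independent
  have hind0 : IsIndep G ↑D₀ := by
    rintro ⟨a, b⟩ hu ⟨a', b'⟩ hw hadj'
    rw [Finset.mem_coe, hmem] at hu hw
    have hu2 : (a.val % 2 = 0 ∧ b = r) ∨ (a.val % 2 = 1 ∧ b ≠ r) := hu
    have hw2 : (a'.val % 2 = 0 ∧ b' = r) ∨ (a'.val % 2 = 1 ∧ b' ≠ r) := hw
    rcases hadj' with ⟨h1, h2, h3⟩ | ⟨h1, h2⟩
    · have h1' : b = r := h1
      have h2' : b' = r := h2
      rw [SimpleGraph.pathGraph_adj] at h3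
      have hu' : a.val % 2 = 0 := by
        rcases hu2 with ⟨h, _⟩ | ⟨_, h⟩
        · exact h
        · exact absurd h1' h
      have hw' : a'.val % 2 = 0 := by
        rcases hw2 with ⟨h, _⟩ | ⟨_, h⟩
        · exact h
        · exact absurd h2' h
      have h3' : a.val + 1 = a'.val ∨ a'.val + 1 = a.val := h3
      omega
    · have h1' : a = a' := h1
      have h2' : (completeBipartiteGraph (Fin 1) (Fin m)).Adj b b' := h2
      subst h1'
      rcases hu2 with ⟨he, hb⟩ | ⟨ho, hb⟩ <;> rcases hw2 with ⟨he', hb'⟩ | ⟨ho', hb'⟩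
      · subst hb; subst hb'; simp [hr] at h2'
      · omega
      · omega
      · obtain ⟨j, rfl⟩ := hleaf _ hb
        obtain ⟨j', rfl⟩ := hleaf _ hb'
        simp at h2' 
  -- the value
  have hval : D₀.card = m * n - K * (m - 1) := by
    rw [hcard0, hsub, harith K (n / 2) (by omega), Nat.mul_comm]
  apply le_antisymm
  · exact Nat.sInf_le ⟨D₀, hdom0, hind0, hval⟩
  · have hmem0 : D₀.card ∈ {k | ∃ S : Finset (Fin n × (Fin 1 ⊕ Fin m)),
        IsDomSet G ↑S ∧ IsIndep G ↑S ∧ S.card = k} := ⟨D₀, hdom0, hind0, rfl⟩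
    apply le_csInf ⟨_, hmem0⟩
    rintro k ⟨D, hdom, hind, rfl⟩
    set I : Finset (Fin n) := Finset.univ.filter (fun a => (a, r) ∈ D) with hI
    have hImem : ∀ a : Fin n, a ∈ I ↔ (a, r) ∈ D := by intro a; simp [hI]
    -- I is independent in the path
    have hIind : ∀ a ∈ I, ∀ a' ∈ I, ¬ (a.val + 1 = a'.val ∨ a'.val + 1 = a.val) := by
      intro a ha a' ha' h
      exact hind (a, r) (by rw [Finset.mem_coe, ← hImem]; exact ha)
        (a', r) (by rw [Finset.mem_coe, ← hImem]; exact ha')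
        (Or.inl ⟨rfl, rfl, SimpleGraph.pathGraph_adj.mpr h⟩)
    -- hence |I| ≤ K
    have hIK : I.card ≤ K := by
      have := Finset.card_le_card_of_injOn (fun a : Fin n => a.val / 2)
        (t := Finset.range K)
        (fun a _ => by simp only [Finset.mem_coe, Finset.mem_range, hK]; have := a.isLt; omega)
        (by
          intro a ha a' ha' h
          simp only at h
          by_contra hne
          have hne' : a.val ≠ a'.val := fun h' => hne (Fin.ext h')
          exact hIind a ha a' ha' (by omega))
      simpa using this
    -- D contains the explicit lower-bound set
    set E : Finset (Fin n × (Fin 1 ⊕ Fin m)) :=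
      I ×ˢ {r} ∪ (Finset.univ \ I) ×ˢ (Finset.univ.erase r) with hE
    have hED : E ⊆ D := by
      rintro ⟨a, b⟩ hp
      rw [hE, Finset.mem_union, Finset.mem_product, Finset.mem_product] at hp
      rcases hp with ⟨h1, h2⟩ | ⟨h1, h2⟩
      · simp only [Finset.mem_singleton] at h2
        subst h2
        exact (hImem a).mp h1
      · simp only [Finset.mem_sdiff, Finset.mem_univ, true_and] at h1
        rw [Finset.mem_erase] at h2
        obtain ⟨j, rfl⟩ := hleaf b h2.1
        by_contra hnd
        obtain ⟨u, hu, huadj⟩ := hdom (a, Sum.inr j) (by rwa [Finset.mem_coe])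
        rcases huadj with ⟨h0, h', _⟩ | ⟨h', h''⟩
        · have h3 : (Sum.inr j : Fin 1 ⊕ Fin m) = r := h'
          simp [hr] at h3
        · rcases u with ⟨a'', b''⟩
          have h1' : a'' = a := h'
          subst h1'
          have h2' : (completeBipartiteGraph (Fin 1) (Fin m)).Adj b'' (Sum.inr j) := h''
          rcases b'' with c | j'
          · rw [hone c] at hu
            exact h1 ((hImem a'').mpr hu)
          · simp at h2'
    -- cardinality of E
    have hcardE : E.card = I.card + (n - I.card) * m := by
      have hdisj : Disjoint (I ×ˢ ({r} : Finset (Fin 1 ⊕ Fin m)))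
          ((Finset.univ \ I) ×ˢ (Finset.univ.erase r)) := by
        rw [Finset.disjoint_left]
        rintro ⟨a, b⟩ h1 h2
        rw [Finset.mem_product] at h1 h2
        simp at h1
        rw [Finset.mem_erase] at h2
        exact h2.2.1 h1.2
      rw [hE, Finset.card_union_of_disjoint hdisj, Finset.card_product, Finset.card_product,
        Finset.card_sdiff_of_subset (Finset.subset_univ I), Finset.card_univ, Fintype.card_fin,
        Finset.card_erase_of_mem (Finset.mem_univ r), Finset.card_univ]
      simp
    have hcards : I.card + (n - I.card) * m ≤ D.card := by
      rw [← hcardE]; exact Finset.card_le_card hED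
    -- final arithmetic
    have hIn : I.card ≤ n := by
      have := Finset.card_le_card (Finset.subset_univ I)
      simpa using this
    rw [hsub]
    have h2 : m * n - K * m' ≤ I.card + (n - I.card) * m := by
      rw [harith I.card (n - I.card) (by omega)]
      have : I.card * m' ≤ K * m' := Nat.mul_le_mul_right m' hIK
      omega
    omega
end

section
/- If T₁ and T₂ are trees of order at least three, then the rooted product T₁∘T₂ is also a tree of order n(T₁)·n(T₂), and its number of end vertices satisfies n₁(T₁∘T₂) = n(T₁)·(n₁(T₂) − 1) if the root of T₂ is an end vertex of T₂, and n₁(T₁∘T₂) = n(T₁)·n₁(T₂) otherwise. -/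
open Finset
open scoped Classical

section AuxLemmas
open SimpleGraph

lemma cut_walk {V : Type*} {G : SimpleGraph V} (f : V → Prop) {x y : V}
    (hf : ∀ a b, G.Adj a b → s(a,b) ≠ s(x,y) → (f a ↔ f b)) {c d : V} (p : G.Walk c d)
    (hm : s(x,y) ∉ p.edges) : f c ↔ f d := by
  induction p with
  | nil => exact Iff.rfl
  | cons h q ih =>
    rw [SimpleGraph.Walk.edges_cons, List.mem_cons, not_or] at hm
    exact (hf _ _ h (fun he => hm.1 he.symm)).trans (ih hm.2)

lemma isBridge_of_cut {V : Type*} (G : SimpleGraph V) (f : V → Prop) {x y : V} (hxy : G.Adj x y)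
    (hf : ∀ a b, G.Adj a b → s(a,b) ≠ s(x,y) → (f a ↔ f b)) (hne : ¬(f x ↔ f y)) :
    G.IsBridge s(x,y) := by
  rw [isBridge_iff_adj_and_forall_walk_mem_edges]
  refine fun p => ?_
  by_contra hm
  exact hne (cut_walk f hf p hm)

lemma cut_of_isBridge {V : Type*} (G : SimpleGraph V) {x y : V} (hb : G.IsBridge s(x,y)) :
    ∃ f : V → Prop, (∀ a b, G.Adj a b → s(a,b) ≠ s(x,y) → (f a ↔ f b)) ∧ f x ∧ ¬ f y := by
  refine ⟨fun a => (G \ fromEdgeSet {s(x,y)}).Reachable x a, fun a b hab hne => ?_, by rfl, ?_⟩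
  · have : (G \ fromEdgeSet {s(x,y)}).Adj a b := by
      simp only [sdiff_adj, fromEdgeSet_adj, Set.mem_singleton_iff]
      exact ⟨hab, fun h => hne h.1⟩
    exact ⟨fun h => h.trans this.reachable, fun h => h.trans this.symm.reachable⟩
  · exact isBridge_iff.mp hb

lemma rootedProd_acyclic {α β : Type*} (T₁ : SimpleGraph α) (T₂ : SimpleGraph β) (v : β)
    (h₁ : T₁.IsAcyclic) (h₂ : T₂.IsAcyclic) : (rootedProd T₁ T₂ v).IsAcyclic := by
  rw [SimpleGraph.isAcyclic_iff_forall_adj_isBridge]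
  intro x y hxy
  rcases id hxy with ⟨hx, hy, hG⟩ | ⟨heq, hH⟩
  · obtain ⟨f₁, hf₁, hfx, hfy⟩ :=
      cut_of_isBridge T₁ (SimpleGraph.isAcyclic_iff_forall_adj_isBridge.mp h₁ hG)
    refine isBridge_of_cut _ (fun p => f₁ p.1) hxy ?_ (fun h => hfy (h.mp hfx))
    rintro a b (⟨ha, hb, hG'⟩ | ⟨heq', _⟩) hne
    · refine hf₁ a.1 b.1 hG' (fun h => hne ?_)
      have := congrArg (Sym2.map (fun c => ((c, v) : α × β))) h
      rw [Sym2.map_pair_eq, Sym2.map_pair_eq] at this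
      rw [show a = (a.1, v) from Prod.ext rfl ha, show b = (b.1, v) from Prod.ext rfl hb,
        show x = (x.1, v) from Prod.ext rfl hx, show y = (y.1, v) from Prod.ext rfl hy]
      exact this
    · exact iff_of_eq (congrArg f₁ heq')
  · obtain ⟨f₂, hf₂, hfx, hfy⟩ :=
      cut_of_isBridge T₂ (SimpleGraph.isAcyclic_iff_forall_adj_isBridge.mp h₂ hH)
    refine isBridge_of_cut _ (fun p => if p.1 = x.1 then f₂ p.2 else f₂ v) hxy ?_ ?_
    · rintro a b (⟨ha, hb, _⟩ | ⟨heq', hH'⟩) hne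
      · simp only [ha, hb, ite_self]
      · by_cases h : a.1 = x.1
        · simp only [h, heq' ▸ h, if_pos]
          refine hf₂ a.2 b.2 hH' (fun hp => hne ?_)
          have := congrArg (Sym2.map (fun c => ((x.1, c) : α × β))) hp
          rw [Sym2.map_pair_eq, Sym2.map_pair_eq] at this
          rw [show a = (x.1, a.2) from Prod.ext h rfl,
            show b = (x.1, b.2) from Prod.ext (heq' ▸ h) rfl,
            show y = (x.1, y.2) from Prod.ext heq.symm rfl]
          simpa using this
        · simp only [if_neg h, if_neg (fun hb => h (heq' ▸ hb))]
    · simp only [if_pos rfl, if_pos heq.symm]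
      exact fun h => hfy (h.mp hfx)

/-- Embedding of the `a`-th copy of `T₂` into the rooted product. -/
def copyHom {α β : Type*} (T₁ : SimpleGraph α) (T₂ : SimpleGraph β) (v : β) (a : α) :
    T₂ →g rootedProd T₁ T₂ v where
  toFun c := (a, c)
  map_rel' h := Or.inr ⟨rfl, h⟩

/-- Embedding of `T₁` as the roots of the copies. -/
def baseHom {α β : Type*} (T₁ : SimpleGraph α) (T₂ : SimpleGraph β) (v : β) :
    T₁ →g rootedProd T₁ T₂ v where
  toFun c := (c, v)
  map_rel' h := Or.inl ⟨rfl, rfl, h⟩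

lemma rootedProd_connected {α β : Type*} (T₁ : SimpleGraph α) (T₂ : SimpleGraph β) (v : β)
    (hc₁ : T₁.Connected) (hc₂ : T₂.Connected) : (rootedProd T₁ T₂ v).Connected := by
  have hne : Nonempty (α × β) := ⟨(hc₁.nonempty.some, hc₂.nonempty.some)⟩
  rw [SimpleGraph.connected_iff]
  refine ⟨fun x y => ?_, hne⟩
  have h1 : (rootedProd T₁ T₂ v).Reachable (x.1, x.2) (x.1, v) :=
    (hc₂.preconnected x.2 v).map (copyHom T₁ T₂ v x.1)
  have h2 : (rootedProd T₁ T₂ v).Reachable (x.1, v) (y.1, v) :=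
    (hc₁.preconnected x.1 y.1).map (baseHom T₁ T₂ v)
  have h3 : (rootedProd T₁ T₂ v).Reachable (y.1, y.2) (y.1, v) :=
    (hc₂.preconnected y.2 v).map (copyHom T₁ T₂ v y.1)
  exact (h1.trans h2).trans h3.symm

lemma rootedProd_neighborSet_ne {α β : Type*} (T₁ : SimpleGraph α) (T₂ : SimpleGraph β) (v : β)
    (a : α) {b : β} (hb : b ≠ v) :
    (rootedProd T₁ T₂ v).neighborSet (a, b) = (fun c => ((a, c) : α × β)) '' T₂.neighborSet b := by
  ext p
  simp only [mem_neighborSet, Set.mem_image]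
  constructor
  · rintro (⟨h1, _, _⟩ | ⟨h1, h2⟩)
    · exact absurd h1 hb
    · exact ⟨p.2, h2, Prod.ext h1 rfl⟩
  · rintro ⟨c, hc, rfl⟩
    exact Or.inr ⟨rfl, hc⟩

lemma rootedProd_neighborSet_root {α β : Type*} (T₁ : SimpleGraph α) (T₂ : SimpleGraph β)
    (v : β) (a : α) :
    (rootedProd T₁ T₂ v).neighborSet (a, v) =
      (fun c => ((c, v) : α × β)) '' T₁.neighborSet a ∪
      (fun c => ((a, c) : α × β)) '' T₂.neighborSet v := by
  ext p
  simp only [mem_neighborSet, Set.mem_image, Set.mem_union]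
  constructor
  · rintro (⟨_, h2, h3⟩ | ⟨h1, h2⟩)
    · exact Or.inl ⟨p.1, h3, Prod.ext rfl h2.symm⟩
    · exact Or.inr ⟨p.2, h2, Prod.ext h1 rfl⟩
  · rintro (⟨c, hc, rfl⟩ | ⟨c, hc, rfl⟩)
    · exact Or.inl ⟨rfl, rfl, hc⟩
    · exact Or.inr ⟨rfl, hc⟩

lemma rootedProd_degree_ne {α β : Type*} [Fintype α] [Fintype β]
    (T₁ : SimpleGraph α) (T₂ : SimpleGraph β) (v : β) (a : α) {b : β} (hb : b ≠ v) :
    (rootedProd T₁ T₂ v).degree (a, b) = T₂.degree b := by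
  rw [← card_neighborSet_eq_degree, ← card_neighborSet_eq_degree,
    ← Nat.card_eq_fintype_card, ← Nat.card_eq_fintype_card,
    Nat.card_coe_set_eq, Nat.card_coe_set_eq,
    rootedProd_neighborSet_ne T₁ T₂ v a hb,
    Set.ncard_image_of_injective _ (fun c d h => congrArg Prod.snd h)]

lemma rootedProd_degree_root {α β : Type*} [Fintype α] [Fintype β]
    (T₁ : SimpleGraph α) (T₂ : SimpleGraph β) (v : β) (a : α) :
    (rootedProd T₁ T₂ v).degree (a, v) = T₁.degree a + T₂.degree v := by
  rw [← card_neighborSet_eq_degree, ← card_neighborSet_eq_degree,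
    ← card_neighborSet_eq_degree,
    ← Nat.card_eq_fintype_card, ← Nat.card_eq_fintype_card, ← Nat.card_eq_fintype_card,
    Nat.card_coe_set_eq, Nat.card_coe_set_eq, Nat.card_coe_set_eq,
    rootedProd_neighborSet_root T₁ T₂ v a]
  rw [Set.ncard_union_eq ?dis (Set.toFinite _) (Set.toFinite _),
    Set.ncard_image_of_injective _
      (fun c d h => congrArg Prod.fst h : Function.Injective fun c => ((c, v) : α × β)),
    Set.ncard_image_of_injective _
      (fun c d h => congrArg Prod.snd h : Function.Injective fun c => ((a, c) : α × β))]
  case dis =>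
    rw [Set.disjoint_left]
    rintro p ⟨c, hc, rfl⟩ ⟨d, hd, h⟩
    have hdv : d = v := congrArg Prod.snd h
    exact T₂.irrefl (hdv ▸ hd)

lemma degree_pos_of_connected {V : Type*} [Fintype V] {G : SimpleGraph V} (hc : G.Connected)
    (h2 : 1 < Fintype.card V) (u : V) : 0 < G.degree u := by
  obtain ⟨w, hw⟩ := Fintype.exists_ne_of_one_lt_card h2 u
  rw [G.degree_pos_iff_exists_adj]
  obtain ⟨p⟩ := hc.preconnected u w
  cases p with
  | nil => exact absurd rfl hw.symm
  | cons h q => exact ⟨_, h⟩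

end AuxLemmas


/-- for trees `T₁, T₂` of order at least three, `T₁∘T₂` is a tree of order
`n(T₁)·n(T₂)`, with `n₁(T₁∘T₂) = n(T₁)·(n₁(T₂)−1)` if the root is an end vertex of `T₂`, and
`n₁(T₁∘T₂) = n(T₁)·n₁(T₂)` otherwise. -/
theorem stmt17 {α β : Type*} [Fintype α] [Fintype β]
    (T₁ : SimpleGraph α) (T₂ : SimpleGraph β) (v : β)
    (h₁ : T₁.IsTree) (h₂ : T₂.IsTree)
    (hn : 3 ≤ Fintype.card α) (hm : 3 ≤ Fintype.card β) :
    (rootedProd T₁ T₂ v).IsTree ∧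
    Fintype.card (α × β) = Fintype.card α * Fintype.card β ∧
    (T₂.degree v = 1 →
      endVertCount (rootedProd T₁ T₂ v) = Fintype.card α * (endVertCount T₂ - 1)) ∧
    (T₂.degree v ≠ 1 →
      endVertCount (rootedProd T₁ T₂ v) = Fintype.card α * endVertCount T₂) := by
  have hcard2α : 1 < Fintype.card α := by omega
  have hcard2β : 1 < Fintype.card β := by omega
  have hpos₁ : ∀ a : α, 0 < T₁.degree a :=
    degree_pos_of_connected h₁.isConnected hcard2α
  have hpos₂ : ∀ b : β, 0 < T₂.degree b :=
    degree_pos_of_connected h₂.isConnected hcard2β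
  have hbne : ∀ u : α × β, (rootedProd T₁ T₂ v).degree u = 1 → u.2 ≠ v := by
    intro u hu hv
    rw [show u = (u.1, v) from Prod.ext rfl hv, rootedProd_degree_root] at hu
    have := hpos₁ u.1
    have := hpos₂ v
    omega
  have e : {u : α × β // (rootedProd T₁ T₂ v).degree u = 1} ≃
      α × {b : β // b ≠ v ∧ T₂.degree b = 1} :=
    { toFun := fun u => (u.1.1, ⟨u.1.2, hbne u.1 u.2, by
        have hu := u.2
        rwa [show u.1 = (u.1.1, u.1.2) from rfl,
          rootedProd_degree_ne T₁ T₂ v u.1.1 (hbne u.1 u.2)] at hu⟩)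
      invFun := fun p => ⟨(p.1, p.2.1), by
        rw [rootedProd_degree_ne T₁ T₂ v p.1 p.2.2.1]
        exact p.2.2.2⟩
      left_inv := fun u => rfl
      right_inv := fun p => rfl }
  have hmain : endVertCount (rootedProd T₁ T₂ v) =
      Fintype.card α * Nat.card {b : β // b ≠ v ∧ T₂.degree b = 1} := by
    rw [endVertCount, Nat.card_congr e, Nat.card_prod, Nat.card_eq_fintype_card]
  refine ⟨⟨rootedProd_connected T₁ T₂ v h₁.isConnected h₂.isConnected,
      rootedProd_acyclic T₁ T₂ v h₁.2 h₂.2⟩, Fintype.card_prod α β, ?_, ?_⟩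
  · intro hv
    rw [hmain]
    congr 1
    rw [endVertCount, Nat.card_eq_fintype_card, Nat.card_eq_fintype_card,
      Fintype.card_subtype, Fintype.card_subtype]
    have hfil : univ.filter (fun b => b ≠ v ∧ T₂.degree b = 1)
        = (univ.filter (fun b => T₂.degree b = 1)).erase v := by
      ext b
      simp only [mem_filter, mem_erase, mem_univ, true_and]
    rw [hfil, card_erase_of_mem (by simp [hv])]
  · intro hv
    rw [hmain]
    congr 1
    rw [endVertCount]
    exact Nat.card_congr (Equiv.subtypeEquivRight (fun b =>
      ⟨And.right, fun h => ⟨fun hb => hv (hb ▸ h), h⟩⟩))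
end
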